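/- arXiv:1911.06198 — 7 statements merged into one kernel-verified Lean document; each statement's English description precedes it below -/
import Mathlib

section
/- Given a Set-Cover instance (a set N of n elements, a collection X of g subsets of N, and an integer h with 1 ≤ h ≤ g), set B = h+1 and construct the following deterministic election instance with three candidates c_0, c_1, c_2: the voter graph is the disjoint union of three components G_1, G_2, G_3. G_1 has a node v_z for each element z ∈ N and a node v_x for each set x ∈ X, with a directed edge from v_x to v_z whenever z ∈ x; every voter in G_1 has score vector ⟨0, B, B+1⟩. G_2 is a bidirected clique (an edge in each direction between every pair of its nodes) on n+h+1 nodes, each with score vector ⟨0, B+1, B⟩. G_3 is a bidirected clique on n+2g−h+3 nodes, of which n+g+2 have score vector ⟨B, B−1, B−2⟩ and g−h+1 have score vector ⟨0, B+1, 0⟩. Then there exist a seed set S and messages M with total budget |M| ≤ h+1 such that MoV(S,M,E) > 0 if and only if there exists X* ⊆ X with |X*| ≤ h and ⋃_{x∈X*} x = N. -/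
open scoped Classical

noncomputable section

/-- `v` is reachable from `s` through the edge set `Es` (every node reaches itself). -/
def Reaches {V : Type*} (Es : Set (V × V)) (s v : V) : Prop :=
  Relation.ReflTransGen (fun a b => (a, b) ∈ Es) s v

/-- The set of influenced voters: those reachable from some seed in `S`. -/
def influenced {V : Type*} [Fintype V] (Es : Set (V × V)) (S : Set V) : Finset V :=
  Finset.univ.filter (fun v => ∃ s ∈ S, Reaches Es s v)

/-- χ(S,E): the number of influenced voters. -/
def chi {V : Type*} [Fintype V] (Es : Set (V × V)) (S : Set V) : ℕ :=
  (influenced Es S).card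

/-- The tie-breaking constant ε = 1/(1 + max_{v,i} π_v(i)). -/
def eps {V : Type*} [Fintype V] {k : ℕ} (π : V → Fin k → ℕ) : ℚ :=
  1 / (1 + ((Finset.univ.sup fun v => Finset.univ.sup fun i => π v i : ℕ) : ℚ))

/-- The final score π*_v(i) = (1-ε)·π_v(i) + Σ_{s ∈ S, v reachable from s} m_s(i). -/
def finalScore {V : Type*} [Fintype V] {k : ℕ} (Es : Set (V × V)) (π : V → Fin k → ℕ)
    (S : Set V) (m : V → Fin k → ℤ) (v : V) (i : Fin k) : ℚ :=
  (1 - eps π) * (π v i : ℚ) +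
    ∑ s ∈ Finset.univ.filter (fun s => s ∈ S ∧ Reaches Es s v), (m s i : ℚ)

/-- V_c: voters whose initial score vector has a strict maximum at `c`. -/
def initVoters {V : Type*} [Fintype V] {k : ℕ} (π : V → Fin k → ℕ) (c : Fin k) : Finset V :=
  Finset.univ.filter (fun v => ∀ j, j ≠ c → π v j < π v c)

/-- V*_c: voters whose final score vector has a strict maximum at `c`. -/
def finalVoters {V : Type*} [Fintype V] {k : ℕ} (Es : Set (V × V)) (π : V → Fin k → ℕ)
    (S : Set V) (m : V → Fin k → ℤ) (c : Fin k) : Finset V :=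
  Finset.univ.filter (fun v => ∀ j, j ≠ c →
    finalScore Es π S m v j < finalScore Es π S m v c)

/-- MoV(S,M,E) = |V*_{c_0}| − max_{c ≠ c_0} |V*_c|. -/
def MoV {V : Type*} [Fintype V] {k : ℕ} [NeZero k] (Es : Set (V × V)) (π : V → Fin k → ℕ)
    (S : Set V) (m : V → Fin k → ℤ) : ℤ :=
  ((finalVoters Es π S m 0).card : ℤ) -
    (((Finset.univ.erase (0 : Fin k)).sup fun c => (finalVoters Es π S m c).card : ℕ) : ℤ)

/-- |M|: the total budget used by seed set `S` with messages `m`. -/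
def totalBudget {V : Type*} [Fintype V] {k : ℕ} (S : Set V) (m : V → Fin k → ℤ) : ℕ :=
  ∑ s ∈ Finset.univ.filter (fun s => s ∈ S), ∑ i, (m s i).natAbs

end

section SetCoverSeeding

variable (α : Type*) (g n h : ℕ)

/-- Voters: component G₁ (a node for each set of the collection and one for each element),
component G₂ (a clique of n+h+1 nodes), and component G₃ (a clique of
(n+g+2) + (g−h+1) nodes of two kinds). -/
abbrev SCVoter :=
  (Fin g ⊕ α) ⊕ (Fin (n + h + 1) ⊕ (Fin (n + g + 2) ⊕ Fin (g - h + 1)))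

variable {α g n h}

/-- Edges: in G₁ an edge from `v_x` to `v_z` whenever `z ∈ x`; G₂ and G₃ are bidirected
cliques (an edge in each direction between every pair of distinct nodes). -/
def SCEdges (X : Fin g → Finset α) : Set (SCVoter α g n h × SCVoter α g n h) :=
  { p | (∃ (x : Fin g) (z : α), z ∈ X x ∧
          p.1 = Sum.inl (Sum.inl x) ∧ p.2 = Sum.inl (Sum.inr z)) ∨
        (∃ u v : Fin (n + h + 1), u ≠ v ∧
          p.1 = Sum.inr (Sum.inl u) ∧ p.2 = Sum.inr (Sum.inl v)) ∨
        (∃ u v : Fin (n + g + 2) ⊕ Fin (g - h + 1), u ≠ v ∧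
          p.1 = Sum.inr (Sum.inr u) ∧ p.2 = Sum.inr (Sum.inr v)) }

/-- Score vectors, with B = h+1: all of G₁ has ⟨0,B,B+1⟩; G₂ has ⟨0,B+1,B⟩; in G₃,
n+g+2 nodes have ⟨B,B−1,B−2⟩ and g−h+1 nodes have ⟨0,B+1,0⟩. -/
def SCScores (B : ℕ) : SCVoter α g n h → Fin 3 → ℕ
  | Sum.inl _ => ![0, B, B + 1]
  | Sum.inr (Sum.inl _) => ![0, B + 1, B]
  | Sum.inr (Sum.inr (Sum.inl _)) => ![B, B - 1, B - 2]
  | Sum.inr (Sum.inr (Sum.inr _)) => ![0, B + 1, 0]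

namespace SCAux

lemma natAbs_sum_le {ι : Type*} (s : Finset ι) (f : ι → ℤ) :
    (∑ i ∈ s, f i).natAbs ≤ ∑ i ∈ s, (f i).natAbs := by
  rw [← Int.ofNat_le]
  push_cast [Int.natCast_natAbs]
  exact Finset.abs_sum_le_sum_abs f s


lemma int_cmp (B : ℕ) (a b : ℕ) (ha : a ≤ B + 1) (hb : b ≤ B + 1) (d : ℤ) :
    d * ((B:ℤ)+2) < ((B:ℤ)+1) * ((b:ℤ) - a) ↔
      (if a < b then d < (b:ℤ) - a
       else if b < a then d ≤ (b:ℤ) - a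
       else d < 0) := by
  rcases lt_trichotomy a b with hab | hab | hab
  · simp only [hab, if_pos]
    set c : ℤ := (b:ℤ) - a with hc
    have hc1 : 1 ≤ c := by omega
    have hc2 : c ≤ (B:ℤ) + 1 := by omega
    constructor
    · intro hlt
      by_contra hd
      push_neg at hd
      nlinarith
    · intro hd
      have : d ≤ c - 1 := by omega
      nlinarith
  · subst hab
    simp only [lt_irrefl, if_neg, if_neg, not_false_iff]
    constructor
    · intro hlt; nlinarith
    · intro hd
      have : d ≤ -1 := by omega
      nlinarith
  · rw [if_neg (by omega), if_pos hab]
    set c : ℤ := (b:ℤ) - a with hc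
    have hc1 : c ≤ -1 := by omega
    have hc2 : -((B:ℤ) + 1) ≤ c := by omega
    constructor
    · intro hlt
      by_contra hd
      push_neg at hd
      have : c + 1 ≤ d := by omega
      nlinarith
    · intro hd
      nlinarith

lemma cmp_lemma (B : ℕ) (a b : ℕ) (ha : a ≤ B + 1) (hb : b ≤ B + 1)
    (r1 r2 : ℤ) :
    ((1 - 1/((B:ℚ)+2)) * a + (r1:ℚ) < (1 - 1/((B:ℚ)+2)) * b + (r2:ℚ)) ↔
      (if a < b then r1 - r2 < (b:ℤ) - a
       else if b < a then r1 - r2 ≤ (b:ℤ) - a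
       else r1 < r2) := by
  have hpos : (0:ℚ) < (B:ℚ) + 2 := by positivity
  have h1 : (1 - 1/((B:ℚ)+2)) = ((B:ℚ)+1)/((B:ℚ)+2) := by field_simp; ring
  have key : ((1 - 1/((B:ℚ)+2)) * a + (r1:ℚ) < (1 - 1/((B:ℚ)+2)) * b + (r2:ℚ)) ↔
      ((r1:ℚ) - r2) * ((B:ℚ)+2) < (((B:ℚ)+1)) * ((b:ℚ) - a) := by
    rw [h1]
    rw [div_mul_eq_mul_div, div_mul_eq_mul_div, div_add' _ _ _ (ne_of_gt hpos),
      div_add' _ _ _ (ne_of_gt hpos), div_lt_div_iff₀ hpos hpos]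
    constructor <;> intro hx <;> nlinarith
  rw [key]
  have hic := int_cmp B a b ha hb (r1 - r2)
  rw [show (((B:ℚ)+1)) * ((b:ℚ) - a) = ((((B:ℤ)+1) * ((b:ℤ) - a) : ℤ) : ℚ) by push_cast; ring,
    show ((r1:ℚ) - r2) * ((B:ℚ)+2) = (((r1 - r2) * ((B:ℤ)+2) : ℤ) : ℚ) by push_cast; ring,
    Int.cast_lt]
  rw [hic]
  split_ifs <;> simp

variable {α : Type*} [Fintype α] [DecidableEq α] {g n h : ℕ}

lemma reaches_iff (X : Fin g → Finset α) (s v : SCVoter α g n h) :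
    Reaches (SCEdges X) s v ↔ s = v ∨
      (∃ (x : Fin g) (z : α), z ∈ X x ∧ s = Sum.inl (Sum.inl x) ∧ v = Sum.inl (Sum.inr z)) ∨
      (∃ u w : Fin (n + h + 1), s = Sum.inr (Sum.inl u) ∧ v = Sum.inr (Sum.inl w)) ∨
      (∃ u w : Fin (n + g + 2) ⊕ Fin (g - h + 1),
        s = Sum.inr (Sum.inr u) ∧ v = Sum.inr (Sum.inr w)) := by
  constructor
  · intro hr
    induction hr with
    | refl => exact Or.inl rfl
    | tail hab hedge ih =>
      rename_i b c
      rcases hedge with ⟨x, z, hz, hb, hc⟩ | ⟨u, w, huw, hb, hc⟩ | ⟨u, w, huw, hb, hc⟩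
      · subst hb; subst hc
        rcases ih with rfl | ⟨x', z', _, hs, hv⟩ | ⟨u', w', hs, hv⟩ | ⟨u', w', hs, hv⟩
        · exact Or.inr (Or.inl ⟨x, z, hz, rfl, rfl⟩)
        · simp at hv
        · simp at hv
        · simp at hv
      · subst hb; subst hc
        rcases ih with rfl | ⟨x', z', _, hs, hv⟩ | ⟨u', w', hs, hv⟩ | ⟨u', w', hs, hv⟩
        · exact Or.inr (Or.inr (Or.inl ⟨u, w, rfl, rfl⟩))
        · simp at hv
        · obtain rfl := hs; exact Or.inr (Or.inr (Or.inl ⟨u', w, rfl, rfl⟩))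
        · simp at hv
      · subst hb; subst hc
        rcases ih with rfl | ⟨x', z', _, hs, hv⟩ | ⟨u', w', hs, hv⟩ | ⟨u', w', hs, hv⟩
        · exact Or.inr (Or.inr (Or.inr ⟨u, w, rfl, rfl⟩))
        · simp at hv
        · simp at hv
        · obtain rfl := hs; exact Or.inr (Or.inr (Or.inr ⟨u', w, rfl, rfl⟩))
  · rintro (rfl | ⟨x, z, hz, rfl, rfl⟩ | ⟨u, w, rfl, rfl⟩ | ⟨u, w, rfl, rfl⟩)
    · exact Relation.ReflTransGen.refl
    · exact Relation.ReflTransGen.single (Or.inl ⟨x, z, hz, rfl, rfl⟩)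
    · rcases eq_or_ne u w with rfl | huw
      · exact Relation.ReflTransGen.refl
      · exact Relation.ReflTransGen.single (Or.inr (Or.inl ⟨u, w, huw, rfl, rfl⟩))
    · rcases eq_or_ne u w with rfl | huw
      · exact Relation.ReflTransGen.refl
      · exact Relation.ReflTransGen.single (Or.inr (Or.inr ⟨u, w, huw, rfl, rfl⟩))

lemma sup_SCScores (B : ℕ) :
    (Finset.univ.sup fun v : SCVoter α g n h => Finset.univ.sup fun i => SCScores B v i)
      = B + 1 := by
  apply le_antisymm
  · apply Finset.sup_le
    intro v _
    apply Finset.sup_le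
    intro i _
    rcases v with (x | z) | (u | (w | w)) <;> fin_cases i <;>
      simp [SCScores] <;> omega
  · calc B + 1 = SCScores B (Sum.inr (Sum.inl ⟨0, by omega⟩) : SCVoter α g n h) 1 := by
          simp [SCScores]
    _ ≤ Finset.univ.sup fun i => SCScores B
          (Sum.inr (Sum.inl ⟨0, by omega⟩) : SCVoter α g n h) i :=
          Finset.le_sup (Finset.mem_univ _)
    _ ≤ _ := Finset.le_sup (f := fun v : SCVoter α g n h =>
          Finset.univ.sup fun i => SCScores B v i) (Finset.mem_univ _)

lemma eps_SCScores (B : ℕ) :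
    eps (SCScores B : SCVoter α g n h → Fin 3 → ℕ) = 1 / ((B:ℚ) + 2) := by
  rw [eps, sup_SCScores]
  push_cast
  ring_nf

lemma SCScores_le (B : ℕ) (v : SCVoter α g n h) (i : Fin 3) : SCScores B v i ≤ B + 1 := by
  rcases v with (x | z) | (u | (w | w)) <;> fin_cases i <;> simp [SCScores] <;> omega

variable (X : Fin g → Finset α) (S : Set (SCVoter α g n h)) (m : SCVoter α g n h → Fin 3 → ℤ)

/-- The total message received by voter `v`. -/
noncomputable def seedSum (v : SCVoter α g n h) (i : Fin 3) : ℤ :=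
  ∑ s ∈ Finset.univ.filter (fun s => s ∈ S ∧ Reaches (SCEdges X) s v), m s i

lemma finalScore_eq (B : ℕ) (v : SCVoter α g n h) (i : Fin 3) :
    finalScore (SCEdges X) (SCScores B) S m v i
      = (1 - 1/((B:ℚ)+2)) * (SCScores B v i : ℚ) + ((seedSum X S m v i : ℤ) : ℚ) := by
  rw [finalScore, eps_SCScores, seedSum]
  push_cast
  ring

lemma mem_finalVoters_iff (B : ℕ) (hB : 2 ≤ B) (v : SCVoter α g n h) (c : Fin 3) :
    v ∈ finalVoters (SCEdges X) (SCScores B) S m c ↔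
    ∀ j, j ≠ c →
      (if SCScores B v j < SCScores B v c then
          seedSum X S m v j - seedSum X S m v c < (SCScores B v c : ℤ) - (SCScores B v j : ℤ)
       else if SCScores B v c < SCScores B v j then
          seedSum X S m v j - seedSum X S m v c ≤ (SCScores B v c : ℤ) - (SCScores B v j : ℤ)
       else seedSum X S m v j < seedSum X S m v c) := by
  rw [finalVoters, Finset.mem_filter]
  simp only [Finset.mem_univ, true_and]
  apply forall_congr'
  intro j
  apply imp_congr_right
  intro _
  rw [finalScore_eq, finalScore_eq,
    cmp_lemma B _ _ (SCScores_le B v j) (SCScores_le B v c)]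

/-- cost of a seed's message -/
def cost (s : SCVoter α g n h) : ℕ := ∑ i, (m s i).natAbs

omit [Fintype α] [DecidableEq α] in
lemma sum_W [Fintype α] {M : Type*} [AddCommMonoid M] (f : SCVoter α g n h → M) :
    ∑ v, f v = (∑ x : Fin g, f (.inl (.inl x)) + ∑ z : α, f (.inl (.inr z))) +
      (∑ u : Fin (n+h+1), f (.inr (.inl u)) +
       (∑ w : Fin (n+g+2), f (.inr (.inr (.inl w))) +
        ∑ w : Fin (g-h+1), f (.inr (.inr (.inr w))))) := by
  rw [Fintype.sum_sum_type, Fintype.sum_sum_type, Fintype.sum_sum_type, Fintype.sum_sum_type]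

noncomputable def CSet : ℕ :=
  ∑ x : Fin g, if (Sum.inl (Sum.inl x) : SCVoter α g n h) ∈ S then cost m (.inl (.inl x)) else 0

noncomputable def CElem : ℕ :=
  ∑ z : α, if (Sum.inl (Sum.inr z) : SCVoter α g n h) ∈ S then cost m (.inl (.inr z)) else 0

noncomputable def C2 : ℕ :=
  ∑ u : Fin (n+h+1), if (Sum.inr (Sum.inl u) : SCVoter α g n h) ∈ S then
    cost m (.inr (.inl u)) else 0

noncomputable def C3A : ℕ :=
  ∑ w : Fin (n+g+2), if (Sum.inr (Sum.inr (Sum.inl w)) : SCVoter α g n h) ∈ S then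
    cost m (.inr (.inr (.inl w))) else 0

noncomputable def C3B : ℕ :=
  ∑ w : Fin (g-h+1), if (Sum.inr (Sum.inr (Sum.inr w)) : SCVoter α g n h) ∈ S then
    cost m (.inr (.inr (.inr w))) else 0

lemma budget_split :
    totalBudget S m = (CSet S m + CElem S m) + (C2 S m + (C3A S m + C3B S m)) := by
  rw [totalBudget, Finset.sum_filter,
    sum_W (f := fun s : SCVoter α g n h => if s ∈ S then ∑ i, (m s i).natAbs else 0)]
  rfl

noncomputable def M2 (i : Fin 3) : ℤ :=
  ∑ u : Fin (n+h+1), if (Sum.inr (Sum.inl u) : SCVoter α g n h) ∈ S then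
    m (.inr (.inl u)) i else 0

noncomputable def M3 (i : Fin 3) : ℤ :=
  ∑ w : Fin (n+g+2) ⊕ Fin (g-h+1), if (Sum.inr (Sum.inr w) : SCVoter α g n h) ∈ S then
    m (.inr (.inr w)) i else 0

lemma seedSum_set (x : Fin g) (i : Fin 3) :
    seedSum X S m (.inl (.inl x)) i =
      if (Sum.inl (Sum.inl x) : SCVoter α g n h) ∈ S then m (.inl (.inl x)) i else 0 := by
  rw [seedSum, Finset.sum_filter]
  rw [Finset.sum_eq_single (Sum.inl (Sum.inl x) : SCVoter α g n h)]
  · by_cases hS : (Sum.inl (Sum.inl x) : SCVoter α g n h) ∈ S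
    · rw [if_pos ⟨hS, Relation.ReflTransGen.refl⟩, if_pos hS]
    · rw [if_neg (by tauto), if_neg hS]
  · intro s _ hne
    rw [if_neg]
    rintro ⟨hsS, hr⟩
    rw [reaches_iff] at hr
    rcases hr with rfl | ⟨x', z', _, hs, hv⟩ | ⟨u', w', hs, hv⟩ | ⟨u', w', hs, hv⟩ <;>
      simp_all
  · simp

lemma seedSum_elem (z : α) (i : Fin 3) :
    seedSum X S m (.inl (.inr z)) i =
      (if (Sum.inl (Sum.inr z) : SCVoter α g n h) ∈ S then m (.inl (.inr z)) i else 0)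
      + ∑ x : Fin g, if ((Sum.inl (Sum.inl x) : SCVoter α g n h) ∈ S ∧ z ∈ X x)
          then m (.inl (.inl x)) i else 0 := by
  rw [seedSum, Finset.sum_filter,
    sum_W (f := fun s : SCVoter α g n h =>
      if s ∈ S ∧ Reaches (SCEdges X) s (.inl (.inr z)) then m s i else 0)]
  have h1 : ∀ x : Fin g,
      (if ((Sum.inl (Sum.inl x) : SCVoter α g n h) ∈ S ∧
          Reaches (SCEdges (n:=n) (h:=h) X) (.inl (.inl x)) (.inl (.inr z))) then m (.inl (.inl x)) i else 0)
      = if ((Sum.inl (Sum.inl x) : SCVoter α g n h) ∈ S ∧ z ∈ X x)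
          then m (.inl (.inl x)) i else 0 := by
    intro x
    apply if_congr _ rfl rfl
    apply and_congr_right
    intro _
    rw [reaches_iff]
    constructor
    · rintro (heq | ⟨x', z', hz', hs, hv⟩ | ⟨u', w', hs, hv⟩ | ⟨u', w', hs, hv⟩) <;> simp_all
    · intro hz
      exact Or.inr (Or.inl ⟨x, z, hz, rfl, rfl⟩)
  have h2 : ∀ z' : α,
      (if ((Sum.inl (Sum.inr z') : SCVoter α g n h) ∈ S ∧
          Reaches (SCEdges (n:=n) (h:=h) X) (.inl (.inr z')) (.inl (.inr z))) then m (.inl (.inr z')) i else 0)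
      = if z' = z then
          (if (Sum.inl (Sum.inr z) : SCVoter α g n h) ∈ S then m (.inl (.inr z)) i else 0)
        else 0 := by
    intro z'
    rcases eq_or_ne z' z with rfl | hne
    · rw [if_pos rfl]
      by_cases hS : (Sum.inl (Sum.inr z') : SCVoter α g n h) ∈ S
      · rw [if_pos ⟨hS, Relation.ReflTransGen.refl⟩, if_pos hS]
      · rw [if_neg (by tauto), if_neg hS]
    · rw [if_neg hne, if_neg]
      rintro ⟨hS, hr⟩
      rw [reaches_iff] at hr
      rcases hr with heq | ⟨x', zz, _, hs, hv⟩ | ⟨u', w', hs, hv⟩ | ⟨u', w', hs, hv⟩ <;>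
        simp_all
  have h3 : ∀ u : Fin (n+h+1),
      (if ((Sum.inr (Sum.inl u) : SCVoter α g n h) ∈ S ∧
          Reaches (SCEdges (n:=n) (h:=h) X) (.inr (.inl u)) (.inl (.inr z))) then m (.inr (.inl u)) i else 0)
      = 0 := by
    intro u
    rw [if_neg]
    rintro ⟨hS, hr⟩
    rw [reaches_iff] at hr
    rcases hr with heq | ⟨x', zz, _, hs, hv⟩ | ⟨u', w', hs, hv⟩ | ⟨u', w', hs, hv⟩ <;> simp_all
  have h4 : ∀ w : Fin (n+g+2),
      (if ((Sum.inr (Sum.inr (Sum.inl w)) : SCVoter α g n h) ∈ S ∧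
          Reaches (SCEdges (n:=n) (h:=h) X) (.inr (.inr (.inl w))) (.inl (.inr z)))
        then m (.inr (.inr (.inl w))) i else 0) = 0 := by
    intro w
    rw [if_neg]
    rintro ⟨hS, hr⟩
    rw [reaches_iff] at hr
    rcases hr with heq | ⟨x', zz, _, hs, hv⟩ | ⟨u', w', hs, hv⟩ | ⟨u', w', hs, hv⟩ <;> simp_all
  have h5 : ∀ w : Fin (g-h+1),
      (if ((Sum.inr (Sum.inr (Sum.inr w)) : SCVoter α g n h) ∈ S ∧
          Reaches (SCEdges (n:=n) (h:=h) X) (.inr (.inr (.inr w))) (.inl (.inr z)))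
        then m (.inr (.inr (.inr w))) i else 0) = 0 := by
    intro w
    rw [if_neg]
    rintro ⟨hS, hr⟩
    rw [reaches_iff] at hr
    rcases hr with heq | ⟨x', zz, _, hs, hv⟩ | ⟨u', w', hs, hv⟩ | ⟨u', w', hs, hv⟩ <;> simp_all
  rw [Finset.sum_congr rfl (fun x _ => h1 x), Finset.sum_congr rfl (fun z' _ => h2 z'),
    Finset.sum_congr rfl (fun u _ => h3 u), Finset.sum_congr rfl (fun w _ => h4 w),
    Finset.sum_congr rfl (fun w _ => h5 w), Finset.sum_ite_eq' Finset.univ z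
      (fun _ => (if (Sum.inl (Sum.inr z) : SCVoter α g n h) ∈ S then m (.inl (.inr z)) i else 0))]
  simp [add_comm]

lemma seedSum_G2 (u : Fin (n+h+1)) (i : Fin 3) :
    seedSum X S m (.inr (.inl u)) i = M2 S m i := by
  rw [seedSum, Finset.sum_filter,
    sum_W (f := fun s : SCVoter α g n h =>
      if s ∈ S ∧ Reaches (SCEdges X) s (.inr (.inl u)) then m s i else 0), M2]
  have h1 : ∀ x : Fin g, (if ((Sum.inl (Sum.inl x) : SCVoter α g n h) ∈ S ∧
      Reaches (SCEdges (n:=n) (h:=h) X) (.inl (.inl x)) (.inr (.inl u))) then m (.inl (.inl x)) i else 0)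
      = 0 := by
    intro x; rw [if_neg]; rintro ⟨hS, hr⟩; rw [reaches_iff] at hr
    rcases hr with heq | ⟨x', zz, _, hs, hv⟩ | ⟨u', w', hs, hv⟩ | ⟨u', w', hs, hv⟩ <;> simp_all
  have h2 : ∀ z : α, (if ((Sum.inl (Sum.inr z) : SCVoter α g n h) ∈ S ∧
      Reaches (SCEdges (n:=n) (h:=h) X) (.inl (.inr z)) (.inr (.inl u))) then m (.inl (.inr z)) i else 0)
      = 0 := by
    intro z; rw [if_neg]; rintro ⟨hS, hr⟩; rw [reaches_iff] at hr
    rcases hr with heq | ⟨x', zz, _, hs, hv⟩ | ⟨u', w', hs, hv⟩ | ⟨u', w', hs, hv⟩ <;> simp_all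
  have h3 : ∀ u' : Fin (n+h+1), (if ((Sum.inr (Sum.inl u') : SCVoter α g n h) ∈ S ∧
      Reaches (SCEdges (n:=n) (h:=h) X) (.inr (.inl u')) (.inr (.inl u))) then m (.inr (.inl u')) i else 0)
      = if (Sum.inr (Sum.inl u') : SCVoter α g n h) ∈ S then m (.inr (.inl u')) i else 0 := by
    intro u'
    apply if_congr _ rfl rfl
    constructor
    · exact fun hx => hx.1
    · intro hS
      exact ⟨hS, (reaches_iff X _ _).mpr (Or.inr (Or.inr (Or.inl ⟨u', u, rfl, rfl⟩)))⟩
  have h4 : ∀ w : Fin (n+g+2),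
      (if ((Sum.inr (Sum.inr (Sum.inl w)) : SCVoter α g n h) ∈ S ∧
          Reaches (SCEdges (n:=n) (h:=h) X) (.inr (.inr (.inl w))) (.inr (.inl u)))
        then m (.inr (.inr (.inl w))) i else 0) = 0 := by
    intro w; rw [if_neg]; rintro ⟨hS, hr⟩; rw [reaches_iff] at hr
    rcases hr with heq | ⟨x', zz, _, hs, hv⟩ | ⟨u', w', hs, hv⟩ | ⟨u', w', hs, hv⟩ <;> simp_all
  have h5 : ∀ w : Fin (g-h+1),
      (if ((Sum.inr (Sum.inr (Sum.inr w)) : SCVoter α g n h) ∈ S ∧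
          Reaches (SCEdges (n:=n) (h:=h) X) (.inr (.inr (.inr w))) (.inr (.inl u)))
        then m (.inr (.inr (.inr w))) i else 0) = 0 := by
    intro w; rw [if_neg]; rintro ⟨hS, hr⟩; rw [reaches_iff] at hr
    rcases hr with heq | ⟨x', zz, _, hs, hv⟩ | ⟨u', w', hs, hv⟩ | ⟨u', w', hs, hv⟩ <;> simp_all
  rw [Finset.sum_congr rfl (fun x _ => h1 x), Finset.sum_congr rfl (fun z _ => h2 z),
    Finset.sum_congr rfl (fun u' _ => h3 u'), Finset.sum_congr rfl (fun w _ => h4 w),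
    Finset.sum_congr rfl (fun w _ => h5 w)]
  simp

lemma seedSum_G3 (w : Fin (n+g+2) ⊕ Fin (g-h+1)) (i : Fin 3) :
    seedSum X S m (.inr (.inr w)) i = M3 S m i := by
  rw [seedSum, Finset.sum_filter,
    sum_W (f := fun s : SCVoter α g n h =>
      if s ∈ S ∧ Reaches (SCEdges X) s (.inr (.inr w)) then m s i else 0), M3,
    Fintype.sum_sum_type]
  have h1 : ∀ x : Fin g, (if ((Sum.inl (Sum.inl x) : SCVoter α g n h) ∈ S ∧
      Reaches (SCEdges (n:=n) (h:=h) X) (.inl (.inl x)) (.inr (.inr w))) then m (.inl (.inl x)) i else 0)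
      = 0 := by
    intro x; rw [if_neg]; rintro ⟨hS, hr⟩; rw [reaches_iff] at hr
    rcases hr with heq | ⟨x', zz, _, hs, hv⟩ | ⟨u', w', hs, hv⟩ | ⟨u', w', hs, hv⟩ <;> simp_all
  have h2 : ∀ z : α, (if ((Sum.inl (Sum.inr z) : SCVoter α g n h) ∈ S ∧
      Reaches (SCEdges (n:=n) (h:=h) X) (.inl (.inr z)) (.inr (.inr w))) then m (.inl (.inr z)) i else 0)
      = 0 := by
    intro z; rw [if_neg]; rintro ⟨hS, hr⟩; rw [reaches_iff] at hr
    rcases hr with heq | ⟨x', zz, _, hs, hv⟩ | ⟨u', w', hs, hv⟩ | ⟨u', w', hs, hv⟩ <;> simp_all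
  have h3 : ∀ u' : Fin (n+h+1), (if ((Sum.inr (Sum.inl u') : SCVoter α g n h) ∈ S ∧
      Reaches (SCEdges (n:=n) (h:=h) X) (.inr (.inl u')) (.inr (.inr w))) then m (.inr (.inl u')) i else 0)
      = 0 := by
    intro u'; rw [if_neg]; rintro ⟨hS, hr⟩; rw [reaches_iff] at hr
    rcases hr with heq | ⟨x', zz, _, hs, hv⟩ | ⟨u', w', hs, hv⟩ | ⟨u', w', hs, hv⟩ <;> simp_all
  have h4 : ∀ w' : Fin (n+g+2) ⊕ Fin (g-h+1),
      (if ((Sum.inr (Sum.inr w') : SCVoter α g n h) ∈ S ∧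
          Reaches (SCEdges (n:=n) (h:=h) X) (.inr (.inr w')) (.inr (.inr w)))
        then m (.inr (.inr w')) i else 0)
      = if (Sum.inr (Sum.inr w') : SCVoter α g n h) ∈ S then m (.inr (.inr w')) i else 0 := by
    intro w'
    apply if_congr _ rfl rfl
    constructor
    · exact fun hx => hx.1
    · intro hS
      exact ⟨hS, (reaches_iff X _ _).mpr (Or.inr (Or.inr (Or.inr ⟨w', w, rfl, rfl⟩)))⟩
  rw [Finset.sum_congr rfl (fun x _ => h1 x), Finset.sum_congr rfl (fun z _ => h2 z),
    Finset.sum_congr rfl (fun u' _ => h3 u')]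
  have h4a := fun w' : Fin (n+g+2) => h4 (Sum.inl w')
  have h4b := fun w' : Fin (g-h+1) => h4 (Sum.inr w')
  rw [Finset.sum_congr rfl (fun w' _ => h4a w'), Finset.sum_congr rfl (fun w' _ => h4b w')]
  simp

lemma seedSum_abs_le (v : SCVoter α g n h) :
    ∑ i, (seedSum X S m v i).natAbs ≤ totalBudget S m := by
  calc ∑ i, (seedSum X S m v i).natAbs
      ≤ ∑ i, ∑ s ∈ Finset.univ.filter
          (fun s => s ∈ S ∧ Reaches (SCEdges X) s v), (m s i).natAbs :=
        Finset.sum_le_sum fun i _ => natAbs_sum_le _ _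
    _ = ∑ s ∈ Finset.univ.filter (fun s => s ∈ S ∧ Reaches (SCEdges X) s v),
          ∑ i, (m s i).natAbs := Finset.sum_comm
    _ ≤ ∑ s ∈ Finset.univ.filter (fun s => s ∈ S), ∑ i, (m s i).natAbs := by
        apply Finset.sum_le_sum_of_subset
        intro s hs
        simp only [Finset.mem_filter] at hs ⊢
        exact ⟨hs.1, hs.2.1⟩
    _ = totalBudget S m := rfl

lemma M2_abs_le : ∑ i, (M2 S m i).natAbs ≤ C2 S m := by
  calc ∑ i, (M2 S m i).natAbs
      ≤ ∑ i, ∑ u : Fin (n+h+1),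
          (if (Sum.inr (Sum.inl u) : SCVoter α g n h) ∈ S then m (.inr (.inl u)) i else 0).natAbs :=
        Finset.sum_le_sum fun i _ => natAbs_sum_le _ _
    _ = ∑ u : Fin (n+h+1), ∑ i,
          (if (Sum.inr (Sum.inl u) : SCVoter α g n h) ∈ S then m (.inr (.inl u)) i else 0).natAbs :=
        Finset.sum_comm
    _ ≤ C2 S m := by
        rw [C2]
        apply Finset.sum_le_sum
        intro u _
        split_ifs with hS
        · simp [cost]
        · simp

lemma M3_abs_le : ∑ i, (M3 S m i).natAbs ≤ C3A S m + C3B S m := by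
  calc ∑ i, (M3 S m i).natAbs
      ≤ ∑ i, ∑ w : Fin (n+g+2) ⊕ Fin (g-h+1),
          (if (Sum.inr (Sum.inr w) : SCVoter α g n h) ∈ S then m (.inr (.inr w)) i else 0).natAbs :=
        Finset.sum_le_sum fun i _ => natAbs_sum_le _ _
    _ = ∑ w : Fin (n+g+2) ⊕ Fin (g-h+1), ∑ i,
          (if (Sum.inr (Sum.inr w) : SCVoter α g n h) ∈ S then m (.inr (.inr w)) i else 0).natAbs :=
        Finset.sum_comm
    _ ≤ C3A S m + C3B S m := by
        rw [Fintype.sum_sum_type, C3A, C3B]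
        refine add_le_add (Finset.sum_le_sum fun w _ => ?_) (Finset.sum_le_sum fun w _ => ?_) <;>
          (split_ifs with hS
           · simp [cost]
           · simp)

section Votes
variable (B : ℕ)

lemma vote_G1_c0 (hB : 2 ≤ B) (y : Fin g ⊕ α) :
    ((Sum.inl y : SCVoter α g n h) ∈ finalVoters (SCEdges X) (SCScores B) S m 0) ↔
      (seedSum X S m (Sum.inl y) 1 - seedSum X S m (Sum.inl y) 0 ≤ -(B:ℤ) ∧ seedSum X S m (Sum.inl y) 2 - seedSum X S m (Sum.inl y) 0 ≤ -(B:ℤ)-1) := by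
  rw [mem_finalVoters_iff X S m B hB]
  constructor
  · intro H
    constructor
    · have hc := H 1 (by decide)
      simp only [↓ite_prop_iff_or, SCScores, Matrix.cons_val_zero, Matrix.cons_val_one, Matrix.head_cons,
        Matrix.cons_val_two, Matrix.tail_cons] at hc
      omega
    · have hc := H 2 (by decide)
      simp only [SCScores, Matrix.cons_val_zero, Matrix.cons_val_one, Matrix.head_cons,
        Matrix.cons_val_two, Matrix.tail_cons] at hc
      split_ifs at hc <;> simp_all <;> omega
  · rintro ⟨h1, h2⟩ j hj
    rcases (show ∀ j : Fin 3, j ≠ 0 → j = 1 ∨ j = 2 by decide) j hj with rfl | rfl <;>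
      (simp only [SCScores, Matrix.cons_val_zero, Matrix.cons_val_one, Matrix.head_cons,
        Matrix.cons_val_two, Matrix.tail_cons]
       split_ifs <;> simp_all <;> omega)

lemma vote_G1_c1 (hB : 2 ≤ B) (y : Fin g ⊕ α) :
    ((Sum.inl y : SCVoter α g n h) ∈ finalVoters (SCEdges X) (SCScores B) S m 1) ↔
      (seedSum X S m (Sum.inl y) 0 - seedSum X S m (Sum.inl y) 1 < (B:ℤ) ∧ seedSum X S m (Sum.inl y) 2 - seedSum X S m (Sum.inl y) 1 ≤ -1) := by
  rw [mem_finalVoters_iff X S m B hB]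
  constructor
  · intro H
    constructor
    · have hc := H 0 (by decide)
      simp only [SCScores, Matrix.cons_val_zero, Matrix.cons_val_one, Matrix.head_cons,
        Matrix.cons_val_two, Matrix.tail_cons] at hc
      split_ifs at hc <;> simp_all <;> omega
    · have hc := H 2 (by decide)
      simp only [SCScores, Matrix.cons_val_zero, Matrix.cons_val_one, Matrix.head_cons,
        Matrix.cons_val_two, Matrix.tail_cons] at hc
      split_ifs at hc <;> simp_all <;> omega
  · rintro ⟨h1, h2⟩ j hj
    rcases (show ∀ j : Fin 3, j ≠ 1 → j = 0 ∨ j = 2 by decide) j hj with rfl | rfl <;>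
      (simp only [SCScores, Matrix.cons_val_zero, Matrix.cons_val_one, Matrix.head_cons,
        Matrix.cons_val_two, Matrix.tail_cons]
       split_ifs <;> simp_all <;> omega)

lemma vote_G1_c2 (hB : 2 ≤ B) (y : Fin g ⊕ α) :
    ((Sum.inl y : SCVoter α g n h) ∈ finalVoters (SCEdges X) (SCScores B) S m 2) ↔
      (seedSum X S m (Sum.inl y) 0 - seedSum X S m (Sum.inl y) 2 < (B:ℤ)+1 ∧ seedSum X S m (Sum.inl y) 1 - seedSum X S m (Sum.inl y) 2 < 1) := by
  rw [mem_finalVoters_iff X S m B hB]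
  constructor
  · intro H
    constructor
    · have hc := H 0 (by decide)
      simp only [SCScores, Matrix.cons_val_zero, Matrix.cons_val_one, Matrix.head_cons,
        Matrix.cons_val_two, Matrix.tail_cons] at hc
      split_ifs at hc <;> simp_all <;> omega
    · have hc := H 1 (by decide)
      simp only [SCScores, Matrix.cons_val_zero, Matrix.cons_val_one, Matrix.head_cons,
        Matrix.cons_val_two, Matrix.tail_cons] at hc
      split_ifs at hc <;> simp_all <;> omega
  · rintro ⟨h1, h2⟩ j hj
    rcases (show ∀ j : Fin 3, j ≠ 2 → j = 0 ∨ j = 1 by decide) j hj with rfl | rfl <;>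
      (simp only [SCScores, Matrix.cons_val_zero, Matrix.cons_val_one, Matrix.head_cons,
        Matrix.cons_val_two, Matrix.tail_cons]
       split_ifs <;> simp_all <;> omega)

lemma vote_G2_c0 (hB : 2 ≤ B) (u : Fin (n+h+1)) :
    ((Sum.inr (Sum.inl u) : SCVoter α g n h) ∈ finalVoters (SCEdges X) (SCScores B) S m 0) ↔
      (M2 S m 1 - M2 S m 0 ≤ -(B:ℤ)-1 ∧ M2 S m 2 - M2 S m 0 ≤ -(B:ℤ)) := by
  rw [mem_finalVoters_iff X S m B hB]
  simp only [seedSum_G2 X S m]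
  constructor
  · intro H
    constructor
    · have hc := H 1 (by decide)
      simp only [SCScores, Matrix.cons_val_zero, Matrix.cons_val_one, Matrix.head_cons,
        Matrix.cons_val_two, Matrix.tail_cons] at hc
      split_ifs at hc <;> simp_all <;> omega
    · have hc := H 2 (by decide)
      simp only [SCScores, Matrix.cons_val_zero, Matrix.cons_val_one, Matrix.head_cons,
        Matrix.cons_val_two, Matrix.tail_cons] at hc
      split_ifs at hc <;> simp_all <;> omega
  · rintro ⟨h1, h2⟩ j hj
    rcases (show ∀ j : Fin 3, j ≠ 0 → j = 1 ∨ j = 2 by decide) j hj with rfl | rfl <;>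
      (simp only [SCScores, Matrix.cons_val_zero, Matrix.cons_val_one, Matrix.head_cons,
        Matrix.cons_val_two, Matrix.tail_cons]
       split_ifs <;> simp_all <;> omega)

lemma vote_G2_c1 (hB : 2 ≤ B) (u : Fin (n+h+1)) :
    ((Sum.inr (Sum.inl u) : SCVoter α g n h) ∈ finalVoters (SCEdges X) (SCScores B) S m 1) ↔
      (M2 S m 0 - M2 S m 1 < (B:ℤ)+1 ∧ M2 S m 2 - M2 S m 1 < 1) := by
  rw [mem_finalVoters_iff X S m B hB]
  simp only [seedSum_G2 X S m]
  constructor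
  · intro H
    constructor
    · have hc := H 0 (by decide)
      simp only [SCScores, Matrix.cons_val_zero, Matrix.cons_val_one, Matrix.head_cons,
        Matrix.cons_val_two, Matrix.tail_cons] at hc
      split_ifs at hc <;> simp_all <;> omega
    · have hc := H 2 (by decide)
      simp only [SCScores, Matrix.cons_val_zero, Matrix.cons_val_one, Matrix.head_cons,
        Matrix.cons_val_two, Matrix.tail_cons] at hc
      split_ifs at hc <;> simp_all <;> omega
  · rintro ⟨h1, h2⟩ j hj
    rcases (show ∀ j : Fin 3, j ≠ 1 → j = 0 ∨ j = 2 by decide) j hj with rfl | rfl <;>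
      (simp only [SCScores, Matrix.cons_val_zero, Matrix.cons_val_one, Matrix.head_cons,
        Matrix.cons_val_two, Matrix.tail_cons]
       split_ifs <;> simp_all <;> omega)

lemma vote_G2_c2 (hB : 2 ≤ B) (u : Fin (n+h+1)) :
    ((Sum.inr (Sum.inl u) : SCVoter α g n h) ∈ finalVoters (SCEdges X) (SCScores B) S m 2) ↔
      (M2 S m 0 - M2 S m 2 < (B:ℤ) ∧ M2 S m 1 - M2 S m 2 ≤ -1) := by
  rw [mem_finalVoters_iff X S m B hB]
  simp only [seedSum_G2 X S m]
  constructor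
  · intro H
    constructor
    · have hc := H 0 (by decide)
      simp only [SCScores, Matrix.cons_val_zero, Matrix.cons_val_one, Matrix.head_cons,
        Matrix.cons_val_two, Matrix.tail_cons] at hc
      split_ifs at hc <;> simp_all <;> omega
    · have hc := H 1 (by decide)
      simp only [SCScores, Matrix.cons_val_zero, Matrix.cons_val_one, Matrix.head_cons,
        Matrix.cons_val_two, Matrix.tail_cons] at hc
      split_ifs at hc <;> simp_all <;> omega
  · rintro ⟨h1, h2⟩ j hj
    rcases (show ∀ j : Fin 3, j ≠ 2 → j = 0 ∨ j = 1 by decide) j hj with rfl | rfl <;>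
      (simp only [SCScores, Matrix.cons_val_zero, Matrix.cons_val_one, Matrix.head_cons,
        Matrix.cons_val_two, Matrix.tail_cons]
       split_ifs <;> simp_all <;> omega)

lemma vote_G3A_c0 (hB : 2 ≤ B) (w : Fin (n+g+2)) :
    ((Sum.inr (Sum.inr (Sum.inl w)) : SCVoter α g n h) ∈ finalVoters (SCEdges X) (SCScores B) S m 0) ↔
      (M3 S m 1 - M3 S m 0 < 1 ∧ M3 S m 2 - M3 S m 0 < 2) := by
  rw [mem_finalVoters_iff X S m B hB]
  simp only [seedSum_G3 X S m]
  constructor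
  · intro H
    constructor
    · have hc := H 1 (by decide)
      simp only [SCScores, Matrix.cons_val_zero, Matrix.cons_val_one, Matrix.head_cons,
        Matrix.cons_val_two, Matrix.tail_cons] at hc
      split_ifs at hc <;> simp_all <;> omega
    · have hc := H 2 (by decide)
      simp only [SCScores, Matrix.cons_val_zero, Matrix.cons_val_one, Matrix.head_cons,
        Matrix.cons_val_two, Matrix.tail_cons] at hc
      split_ifs at hc <;> simp_all <;> omega
  · rintro ⟨h1, h2⟩ j hj
    rcases (show ∀ j : Fin 3, j ≠ 0 → j = 1 ∨ j = 2 by decide) j hj with rfl | rfl <;>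
      (simp only [SCScores, Matrix.cons_val_zero, Matrix.cons_val_one, Matrix.head_cons,
        Matrix.cons_val_two, Matrix.tail_cons]
       split_ifs <;> simp_all <;> omega)

lemma vote_G3A_c1 (hB : 2 ≤ B) (w : Fin (n+g+2)) :
    ((Sum.inr (Sum.inr (Sum.inl w)) : SCVoter α g n h) ∈ finalVoters (SCEdges X) (SCScores B) S m 1) ↔
      (M3 S m 0 - M3 S m 1 ≤ -1 ∧ M3 S m 2 - M3 S m 1 < 1) := by
  rw [mem_finalVoters_iff X S m B hB]
  simp only [seedSum_G3 X S m]
  constructor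
  · intro H
    constructor
    · have hc := H 0 (by decide)
      simp only [↓ite_prop_iff_or, SCScores, Matrix.cons_val_zero, Matrix.cons_val_one, Matrix.head_cons,
        Matrix.cons_val_two, Matrix.tail_cons] at hc
      omega
    · have hc := H 2 (by decide)
      simp only [SCScores, Matrix.cons_val_zero, Matrix.cons_val_one, Matrix.head_cons,
        Matrix.cons_val_two, Matrix.tail_cons] at hc
      split_ifs at hc <;> simp_all <;> omega
  · rintro ⟨h1, h2⟩ j hj
    rcases (show ∀ j : Fin 3, j ≠ 1 → j = 0 ∨ j = 2 by decide) j hj with rfl | rfl <;>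
      (simp only [↓ite_prop_iff_or, SCScores, Matrix.cons_val_zero, Matrix.cons_val_one, Matrix.head_cons,
        Matrix.cons_val_two, Matrix.tail_cons]
       omega)

lemma vote_G3A_c2 (hB : 2 ≤ B) (w : Fin (n+g+2)) :
    ((Sum.inr (Sum.inr (Sum.inl w)) : SCVoter α g n h) ∈ finalVoters (SCEdges X) (SCScores B) S m 2) ↔
      (M3 S m 0 - M3 S m 2 ≤ -2 ∧ M3 S m 1 - M3 S m 2 ≤ -1) := by
  rw [mem_finalVoters_iff X S m B hB]
  simp only [seedSum_G3 X S m]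
  constructor
  · intro H
    constructor
    · have hc := H 0 (by decide)
      simp only [SCScores, Matrix.cons_val_zero, Matrix.cons_val_one, Matrix.head_cons,
        Matrix.cons_val_two, Matrix.tail_cons] at hc
      split_ifs at hc <;> simp_all <;> omega
    · have hc := H 1 (by decide)
      simp only [SCScores, Matrix.cons_val_zero, Matrix.cons_val_one, Matrix.head_cons,
        Matrix.cons_val_two, Matrix.tail_cons] at hc
      split_ifs at hc <;> simp_all <;> omega
  · rintro ⟨h1, h2⟩ j hj
    rcases (show ∀ j : Fin 3, j ≠ 2 → j = 0 ∨ j = 1 by decide) j hj with rfl | rfl <;>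
      (simp only [SCScores, Matrix.cons_val_zero, Matrix.cons_val_one, Matrix.head_cons,
        Matrix.cons_val_two, Matrix.tail_cons]
       split_ifs <;> simp_all <;> omega)

lemma vote_G3B_c0 (hB : 2 ≤ B) (w : Fin (g-h+1)) :
    ((Sum.inr (Sum.inr (Sum.inr w)) : SCVoter α g n h) ∈ finalVoters (SCEdges X) (SCScores B) S m 0) ↔
      (M3 S m 1 - M3 S m 0 ≤ -(B:ℤ)-1 ∧ M3 S m 2 - M3 S m 0 < 0) := by
  rw [mem_finalVoters_iff X S m B hB]
  simp only [seedSum_G3 X S m]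
  constructor
  · intro H
    constructor
    · have hc := H 1 (by decide)
      simp only [SCScores, Matrix.cons_val_zero, Matrix.cons_val_one, Matrix.head_cons,
        Matrix.cons_val_two, Matrix.tail_cons] at hc
      split_ifs at hc <;> simp_all <;> omega
    · have hc := H 2 (by decide)
      simp only [SCScores, Matrix.cons_val_zero, Matrix.cons_val_one, Matrix.head_cons,
        Matrix.cons_val_two, Matrix.tail_cons] at hc
      split_ifs at hc <;> simp_all <;> omega
  · rintro ⟨h1, h2⟩ j hj
    rcases (show ∀ j : Fin 3, j ≠ 0 → j = 1 ∨ j = 2 by decide) j hj with rfl | rfl <;>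
      (simp only [SCScores, Matrix.cons_val_zero, Matrix.cons_val_one, Matrix.head_cons,
        Matrix.cons_val_two, Matrix.tail_cons]
       split_ifs <;> simp_all <;> omega)

lemma vote_G3B_c1 (hB : 2 ≤ B) (w : Fin (g-h+1)) :
    ((Sum.inr (Sum.inr (Sum.inr w)) : SCVoter α g n h) ∈ finalVoters (SCEdges X) (SCScores B) S m 1) ↔
      (M3 S m 0 - M3 S m 1 < (B:ℤ)+1 ∧ M3 S m 2 - M3 S m 1 < (B:ℤ)+1) := by
  rw [mem_finalVoters_iff X S m B hB]
  simp only [seedSum_G3 X S m]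
  constructor
  · intro H
    constructor
    · have hc := H 0 (by decide)
      simp only [SCScores, Matrix.cons_val_zero, Matrix.cons_val_one, Matrix.head_cons,
        Matrix.cons_val_two, Matrix.tail_cons] at hc
      split_ifs at hc <;> simp_all <;> omega
    · have hc := H 2 (by decide)
      simp only [SCScores, Matrix.cons_val_zero, Matrix.cons_val_one, Matrix.head_cons,
        Matrix.cons_val_two, Matrix.tail_cons] at hc
      split_ifs at hc <;> simp_all <;> omega
  · rintro ⟨h1, h2⟩ j hj
    rcases (show ∀ j : Fin 3, j ≠ 1 → j = 0 ∨ j = 2 by decide) j hj with rfl | rfl <;>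
      (simp only [SCScores, Matrix.cons_val_zero, Matrix.cons_val_one, Matrix.head_cons,
        Matrix.cons_val_two, Matrix.tail_cons]
       split_ifs <;> simp_all <;> omega)

lemma vote_G3B_c2 (hB : 2 ≤ B) (w : Fin (g-h+1)) :
    ((Sum.inr (Sum.inr (Sum.inr w)) : SCVoter α g n h) ∈ finalVoters (SCEdges X) (SCScores B) S m 2) ↔
      (M3 S m 0 - M3 S m 2 < 0 ∧ M3 S m 1 - M3 S m 2 ≤ -(B:ℤ)-1) := by
  rw [mem_finalVoters_iff X S m B hB]
  simp only [seedSum_G3 X S m]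
  constructor
  · intro H
    constructor
    · have hc := H 0 (by decide)
      simp only [SCScores, Matrix.cons_val_zero, Matrix.cons_val_one, Matrix.head_cons,
        Matrix.cons_val_two, Matrix.tail_cons] at hc
      split_ifs at hc <;> omega
    · have hc := H 1 (by decide)
      simp only [SCScores, Matrix.cons_val_zero, Matrix.cons_val_one, Matrix.head_cons,
        Matrix.cons_val_two, Matrix.tail_cons] at hc
      split_ifs at hc <;> omega
  · rintro ⟨h1, h2⟩ j hj
    rcases (show ∀ j : Fin 3, j ≠ 2 → j = 0 ∨ j = 1 by decide) j hj with rfl | rfl <;>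
      (simp only [SCScores, Matrix.cons_val_zero, Matrix.cons_val_one, Matrix.head_cons,
        Matrix.cons_val_two, Matrix.tail_cons]
       split_ifs <;> omega)

end Votes

lemma card_eq_sum_W (s : Finset (SCVoter α g n h)) :
    s.card = (∑ x : Fin g, if (Sum.inl (Sum.inl x) : SCVoter α g n h) ∈ s then 1 else 0) +
      (∑ z : α, if (Sum.inl (Sum.inr z) : SCVoter α g n h) ∈ s then 1 else 0) +
      ((∑ u : Fin (n+h+1), if (Sum.inr (Sum.inl u) : SCVoter α g n h) ∈ s then 1 else 0) +
       ((∑ w : Fin (n+g+2), if (Sum.inr (Sum.inr (Sum.inl w)) : SCVoter α g n h) ∈ s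
            then 1 else 0) +
        (∑ w : Fin (g-h+1), if (Sum.inr (Sum.inr (Sum.inr w)) : SCVoter α g n h) ∈ s
            then 1 else 0))) := by
  have h0 : s.card = ∑ v : SCVoter α g n h, if v ∈ s then 1 else 0 := by
    rw [Finset.sum_ite_mem, Finset.univ_inter, Finset.sum_const, smul_eq_mul, mul_one]
  rw [h0, sum_W]

lemma sum_ite_mem_card {β : Type*} [Fintype β] [DecidableEq β] (t : Finset β) :
    (∑ x : β, if x ∈ t then 1 else 0) = t.card := by
  rw [Finset.sum_ite_mem, Finset.univ_inter, Finset.sum_const, smul_eq_mul, mul_one]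

/-- messages used in the forward direction -/
def fwdm : SCVoter α g n h → Fin 3 → ℤ
  | Sum.inl (Sum.inl _) => ![0, 0, -1]
  | Sum.inl (Sum.inr _) => 0
  | Sum.inr (Sum.inl _) => ![0, -1, 0]
  | Sum.inr (Sum.inr _) => 0

/-- seeds used in the forward direction -/
def fwdS (J' : Finset (Fin g)) (u0 : Fin (n+h+1)) : Set (SCVoter α g n h) :=
  {s | (∃ x ∈ J', s = Sum.inl (Sum.inl x)) ∨ s = Sum.inr (Sum.inl u0)}

omit [Fintype α] [DecidableEq α] in
lemma mem_fwdS_set (J' : Finset (Fin g)) (u0 : Fin (n+h+1)) (x : Fin g) :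
    ((Sum.inl (Sum.inl x) : SCVoter α g n h) ∈ fwdS J' u0) ↔ x ∈ J' := by
  simp [fwdS]

omit [Fintype α] [DecidableEq α] in
lemma mem_fwdS_elem (J' : Finset (Fin g)) (u0 : Fin (n+h+1)) (z : α) :
    ¬ ((Sum.inl (Sum.inr z) : SCVoter α g n h) ∈ fwdS J' u0) := by
  simp [fwdS]

omit [Fintype α] [DecidableEq α] in
lemma mem_fwdS_G2 (J' : Finset (Fin g)) (u0 : Fin (n+h+1)) (u : Fin (n+h+1)) :
    ((Sum.inr (Sum.inl u) : SCVoter α g n h) ∈ fwdS J' u0) ↔ u = u0 := by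
  simp [fwdS]

omit [Fintype α] [DecidableEq α] in
lemma mem_fwdS_G3 (J' : Finset (Fin g)) (u0 : Fin (n+h+1))
    (w : Fin (n+g+2) ⊕ Fin (g-h+1)) :
    ¬ ((Sum.inr (Sum.inr w) : SCVoter α g n h) ∈ fwdS J' u0) := by
  simp [fwdS]

omit [Fintype α] [DecidableEq α] in
lemma fwdm_set (x : Fin g) :
    fwdm (α := α) (g := g) (n := n) (h := h) (Sum.inl (Sum.inl x)) = ![0, 0, -1] := rfl
omit [Fintype α] [DecidableEq α] in
lemma fwdm_elem (z : α) :
    fwdm (α := α) (g := g) (n := n) (h := h) (Sum.inl (Sum.inr z)) = 0 := rfl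
omit [Fintype α] [DecidableEq α] in
lemma fwdm_G2 (u : Fin (n+h+1)) :
    fwdm (α := α) (g := g) (n := n) (h := h) (Sum.inr (Sum.inl u)) = ![0, -1, 0] := rfl
omit [Fintype α] [DecidableEq α] in
lemma fwdm_G3 (w : Fin (n+g+2) ⊕ Fin (g-h+1)) :
    fwdm (α := α) (g := g) (n := n) (h := h) (Sum.inr (Sum.inr w)) = 0 := rfl

lemma sum_ite_not_mem_card {β : Type*} [Fintype β] [DecidableEq β] (t : Finset β) :
    (∑ x : β, if x ∉ t then 1 else 0) = Fintype.card β - t.card := by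
  rw [← Finset.card_filter, Finset.filter_not, Finset.filter_univ_mem,
    Finset.card_sdiff_of_subset (Finset.subset_univ t), Finset.card_univ]

lemma fwd_correct (hh : 1 ≤ h) (hhg : h ≤ g) (hcard : Fintype.card α = n)
    (J' : Finset (Fin g)) (u0 : Fin (n+h+1)) (hJc : J'.card = h)
    (hcov : ∀ z : α, ∃ x ∈ J', z ∈ X x) :
    totalBudget (fwdS J' u0) (fwdm (α := α) (g := g) (n := n) (h := h)) ≤ h + 1 ∧
      0 < MoV (SCEdges X) (SCScores (h+1)) (fwdS J' u0) fwdm := by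
  have hB : 2 ≤ h + 1 := by omega
  -- seedSum values
  have rset : ∀ (x : Fin g) (i : Fin 3),
      seedSum X (fwdS J' u0) fwdm (Sum.inl (Sum.inl x)) i
        = if x ∈ J' then ![0, 0, -1] i else 0 := by
    intro x i
    rw [seedSum_set, fwdm_set]
    simp only [mem_fwdS_set]
  have relem : ∀ (z : α) (i : Fin 3),
      seedSum X (fwdS J' u0) fwdm (Sum.inl (Sum.inr z)) i
        = ∑ x : Fin g, if ((Sum.inl (Sum.inl x) : SCVoter α g n h) ∈ fwdS J' u0 ∧ z ∈ X x)
            then ![0, 0, -1] i else 0 := by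
    intro z i
    rw [seedSum_elem, if_neg (mem_fwdS_elem J' u0 z), zero_add]
    apply Finset.sum_congr rfl
    intro x _
    rw [fwdm_set]
  have relem01 : ∀ (z : α) (i : Fin 3), i = 0 ∨ i = 1 →
      seedSum X (fwdS J' u0) fwdm (Sum.inl (Sum.inr z)) i = 0 := by
    intro z i hi
    rw [relem]
    apply Finset.sum_eq_zero
    intro x _
    rcases hi with rfl | rfl <;> split_ifs <;> simp
  have relem2 : ∀ z : α,
      seedSum X (fwdS J' u0) fwdm (Sum.inl (Sum.inr z)) 2 ≤ -1 := by
    intro z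
    rw [relem]
    obtain ⟨x0, hx0J, hx0X⟩ := hcov z
    calc ∑ x : Fin g, (if ((Sum.inl (Sum.inl x) : SCVoter α g n h) ∈ fwdS J' u0 ∧ z ∈ X x)
            then ![0, 0, -1] 2 else (0:ℤ))
        ≤ ∑ x : Fin g, (if x = x0 then (-1:ℤ) else 0) := by
          apply Finset.sum_le_sum
          intro x _
          rcases eq_or_ne x x0 with rfl | hne
          · rw [if_pos rfl, if_pos ⟨(mem_fwdS_set J' u0 x).2 hx0J, hx0X⟩]
            simp
          · rw [if_neg hne]
            split_ifs <;> simp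
      _ = -1 := by rw [Fintype.sum_ite_eq' x0 (fun _ => (-1:ℤ))]
  have hM2 : ∀ i : Fin 3, M2 (α := α) (fwdS J' u0) fwdm i = ![0, -1, 0] i := by
    intro i
    rw [M2]
    have : ∀ u : Fin (n+h+1),
        (if (Sum.inr (Sum.inl u) : SCVoter α g n h) ∈ fwdS J' u0
          then fwdm (α := α) (g := g) (Sum.inr (Sum.inl u)) i else 0)
        = if u = u0 then ![0, -1, 0] i else 0 := by
      intro u
      rw [fwdm_G2]
      simp only [mem_fwdS_G2]
    rw [Finset.sum_congr rfl (fun u _ => this u), Fintype.sum_ite_eq' u0]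
  have hM3 : ∀ i : Fin 3, M3 (α := α) (fwdS J' u0) fwdm i = 0 := by
    intro i
    rw [M3]
    apply Finset.sum_eq_zero
    intro w _
    rw [if_neg (mem_fwdS_G3 J' u0 w)]
  -- budget
  constructor
  · rw [budget_split]
    have e1 : CSet (fwdS J' u0) (fwdm (α := α) (g := g) (n := n) (h := h)) = h := by
      rw [CSet]
      have : ∀ x : Fin g,
          (if (Sum.inl (Sum.inl x) : SCVoter α g n h) ∈ fwdS J' u0
            then cost (fwdm (α := α) (g := g) (n := n) (h := h)) (Sum.inl (Sum.inl x)) else 0) = if x ∈ J' then 1 else 0 := by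
        intro x
        simp only [mem_fwdS_set]
        split_ifs with hx
        · simp [cost, Fin.sum_univ_three, fwdm_set]
        · rfl
      rw [Finset.sum_congr rfl (fun x _ => this x), sum_ite_mem_card, hJc]
    have e2 : CElem (fwdS J' u0) (fwdm (α := α) (g := g) (n := n) (h := h)) = 0 := by
      rw [CElem]
      apply Finset.sum_eq_zero
      intro z _
      rw [if_neg (mem_fwdS_elem J' u0 z)]
    have e3 : C2 (fwdS J' u0) (fwdm (α := α) (g := g) (n := n) (h := h)) = 1 := by
      rw [C2]
      have : ∀ u : Fin (n+h+1),
          (if (Sum.inr (Sum.inl u) : SCVoter α g n h) ∈ fwdS J' u0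
            then cost (fwdm (α := α) (g := g) (n := n) (h := h)) (Sum.inr (Sum.inl u)) else 0) = if u = u0 then 1 else 0 := by
        intro u
        simp only [mem_fwdS_G2]
        split_ifs with hx
        · simp [cost, Fin.sum_univ_three, fwdm_G2]
        · rfl
      rw [Finset.sum_congr rfl (fun u _ => this u), Fintype.sum_ite_eq' u0]
    have e4 : C3A (fwdS J' u0) (fwdm (α := α) (g := g) (n := n) (h := h)) = 0 := by
      rw [C3A]
      apply Finset.sum_eq_zero
      intro w _
      rw [if_neg (mem_fwdS_G3 J' u0 (Sum.inl w))]
    have e5 : C3B (fwdS J' u0) (fwdm (α := α) (g := g) (n := n) (h := h)) = 0 := by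
      rw [C3B]
      apply Finset.sum_eq_zero
      intro w _
      rw [if_neg (mem_fwdS_G3 J' u0 (Sum.inr w))]
    rw [e1, e2, e3, e4, e5]
  -- MoV
  · have card0 : (finalVoters (SCEdges X) (SCScores (h+1)) (fwdS J' u0) fwdm 0).card
        = n + g + 2 := by
      rw [card_eq_sum_W]
      have t1 : ∀ x : Fin g, (if (Sum.inl (Sum.inl x) : SCVoter α g n h) ∈
          finalVoters (SCEdges X) (SCScores (h+1)) (fwdS J' u0) fwdm 0 then 1 else 0) = 0 := by
        intro x
        rw [if_neg]
        rw [vote_G1_c0 X (fwdS J' u0) fwdm (h+1) hB]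
        rw [rset, rset, rset]
        split_ifs <;> simp <;> omega
      have t2 : ∀ z : α, (if (Sum.inl (Sum.inr z) : SCVoter α g n h) ∈
          finalVoters (SCEdges X) (SCScores (h+1)) (fwdS J' u0) fwdm 0 then 1 else 0) = 0 := by
        intro z
        rw [if_neg]
        rw [vote_G1_c0 X (fwdS J' u0) fwdm (h+1) hB]
        rw [relem01 z 0 (Or.inl rfl), relem01 z 1 (Or.inr rfl)]
        intro hcond
        omega
      have t3 : ∀ u : Fin (n+h+1), (if (Sum.inr (Sum.inl u) : SCVoter α g n h) ∈
          finalVoters (SCEdges X) (SCScores (h+1)) (fwdS J' u0) fwdm 0 then 1 else 0) = 0 := by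
        intro u
        rw [if_neg]
        rw [vote_G2_c0 X (fwdS J' u0) fwdm (h+1) hB]
        rw [hM2, hM2, hM2]
        simp only [Matrix.cons_val_zero, Matrix.cons_val_one, Matrix.head_cons,
          Matrix.cons_val_two, Matrix.tail_cons]
        omega
      have t4 : ∀ w : Fin (n+g+2), (if (Sum.inr (Sum.inr (Sum.inl w)) : SCVoter α g n h) ∈
          finalVoters (SCEdges X) (SCScores (h+1)) (fwdS J' u0) fwdm 0 then 1 else 0) = 1 := by
        intro w
        rw [if_pos]
        rw [vote_G3A_c0 X (fwdS J' u0) fwdm (h+1) hB]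
        rw [hM3, hM3, hM3]
        omega
      have t5 : ∀ w : Fin (g-h+1), (if (Sum.inr (Sum.inr (Sum.inr w)) : SCVoter α g n h) ∈
          finalVoters (SCEdges X) (SCScores (h+1)) (fwdS J' u0) fwdm 0 then 1 else 0) = 0 := by
        intro w
        rw [if_neg]
        rw [vote_G3B_c0 X (fwdS J' u0) fwdm (h+1) hB]
        rw [hM3, hM3, hM3]
        omega
      rw [Finset.sum_congr rfl (fun x _ => t1 x), Finset.sum_congr rfl (fun z _ => t2 z),
        Finset.sum_congr rfl (fun u _ => t3 u), Finset.sum_congr rfl (fun w _ => t4 w),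
        Finset.sum_congr rfl (fun w _ => t5 w)]
      simp
    have card1 : (finalVoters (SCEdges X) (SCScores (h+1)) (fwdS J' u0) fwdm 1).card
        = n + g + 1 := by
      rw [card_eq_sum_W]
      have t1 : ∀ x : Fin g, (if (Sum.inl (Sum.inl x) : SCVoter α g n h) ∈
          finalVoters (SCEdges X) (SCScores (h+1)) (fwdS J' u0) fwdm 1 then 1 else 0)
          = if x ∈ J' then 1 else 0 := by
        intro x
        congr 1
        rw [eq_iff_iff, vote_G1_c1 X (fwdS J' u0) fwdm (h+1) hB]
        rw [rset, rset, rset]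
        split_ifs with hx <;> simp [hx] <;> omega
      have t2 : ∀ z : α, (if (Sum.inl (Sum.inr z) : SCVoter α g n h) ∈
          finalVoters (SCEdges X) (SCScores (h+1)) (fwdS J' u0) fwdm 1 then 1 else 0) = 1 := by
        intro z
        rw [if_pos]
        rw [vote_G1_c1 X (fwdS J' u0) fwdm (h+1) hB]
        rw [relem01 z 0 (Or.inl rfl), relem01 z 1 (Or.inr rfl)]
        have := relem2 z
        omega
      have t3 : ∀ u : Fin (n+h+1), (if (Sum.inr (Sum.inl u) : SCVoter α g n h) ∈
          finalVoters (SCEdges X) (SCScores (h+1)) (fwdS J' u0) fwdm 1 then 1 else 0) = 0 := by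
        intro u
        rw [if_neg]
        rw [vote_G2_c1 X (fwdS J' u0) fwdm (h+1) hB]
        rw [hM2, hM2, hM2]
        simp only [Matrix.cons_val_zero, Matrix.cons_val_one, Matrix.head_cons,
          Matrix.cons_val_two, Matrix.tail_cons]
        omega
      have t4 : ∀ w : Fin (n+g+2), (if (Sum.inr (Sum.inr (Sum.inl w)) : SCVoter α g n h) ∈
          finalVoters (SCEdges X) (SCScores (h+1)) (fwdS J' u0) fwdm 1 then 1 else 0) = 0 := by
        intro w
        rw [if_neg]
        rw [vote_G3A_c1 X (fwdS J' u0) fwdm (h+1) hB]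
        rw [hM3, hM3, hM3]
        omega
      have t5 : ∀ w : Fin (g-h+1), (if (Sum.inr (Sum.inr (Sum.inr w)) : SCVoter α g n h) ∈
          finalVoters (SCEdges X) (SCScores (h+1)) (fwdS J' u0) fwdm 1 then 1 else 0) = 1 := by
        intro w
        rw [if_pos]
        rw [vote_G3B_c1 X (fwdS J' u0) fwdm (h+1) hB]
        rw [hM3, hM3, hM3]
        omega
      rw [Finset.sum_congr rfl (fun x _ => t1 x), Finset.sum_congr rfl (fun z _ => t2 z),
        Finset.sum_congr rfl (fun u _ => t3 u), Finset.sum_congr rfl (fun w _ => t4 w),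
        Finset.sum_congr rfl (fun w _ => t5 w), sum_ite_mem_card, hJc]
      simp [hcard]
      omega
    have card2 : (finalVoters (SCEdges X) (SCScores (h+1)) (fwdS J' u0) fwdm 2).card
        = n + g + 1 := by
      rw [card_eq_sum_W]
      have t1 : ∀ x : Fin g, (if (Sum.inl (Sum.inl x) : SCVoter α g n h) ∈
          finalVoters (SCEdges X) (SCScores (h+1)) (fwdS J' u0) fwdm 2 then 1 else 0)
          = if x ∉ J' then 1 else 0 := by
        intro x
        congr 1
        rw [eq_iff_iff, vote_G1_c2 X (fwdS J' u0) fwdm (h+1) hB]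
        rw [rset, rset, rset]
        split_ifs with hx <;> simp [hx] <;> omega
      have t2 : ∀ z : α, (if (Sum.inl (Sum.inr z) : SCVoter α g n h) ∈
          finalVoters (SCEdges X) (SCScores (h+1)) (fwdS J' u0) fwdm 2 then 1 else 0) = 0 := by
        intro z
        rw [if_neg]
        rw [vote_G1_c2 X (fwdS J' u0) fwdm (h+1) hB]
        rw [relem01 z 0 (Or.inl rfl), relem01 z 1 (Or.inr rfl)]
        have := relem2 z
        omega
      have t3 : ∀ u : Fin (n+h+1), (if (Sum.inr (Sum.inl u) : SCVoter α g n h) ∈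
          finalVoters (SCEdges X) (SCScores (h+1)) (fwdS J' u0) fwdm 2 then 1 else 0) = 1 := by
        intro u
        rw [if_pos]
        rw [vote_G2_c2 X (fwdS J' u0) fwdm (h+1) hB]
        rw [hM2, hM2, hM2]
        simp only [Matrix.cons_val_zero, Matrix.cons_val_one, Matrix.head_cons,
          Matrix.cons_val_two, Matrix.tail_cons]
        omega
      have t4 : ∀ w : Fin (n+g+2), (if (Sum.inr (Sum.inr (Sum.inl w)) : SCVoter α g n h) ∈
          finalVoters (SCEdges X) (SCScores (h+1)) (fwdS J' u0) fwdm 2 then 1 else 0) = 0 := by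
        intro w
        rw [if_neg]
        rw [vote_G3A_c2 X (fwdS J' u0) fwdm (h+1) hB]
        rw [hM3, hM3, hM3]
        omega
      have t5 : ∀ w : Fin (g-h+1), (if (Sum.inr (Sum.inr (Sum.inr w)) : SCVoter α g n h) ∈
          finalVoters (SCEdges X) (SCScores (h+1)) (fwdS J' u0) fwdm 2 then 1 else 0) = 0 := by
        intro w
        rw [if_neg]
        rw [vote_G3B_c2 X (fwdS J' u0) fwdm (h+1) hB]
        rw [hM3, hM3, hM3]
        omega
      rw [Finset.sum_congr rfl (fun x _ => t1 x), Finset.sum_congr rfl (fun z _ => t2 z),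
        Finset.sum_congr rfl (fun u _ => t3 u), Finset.sum_congr rfl (fun w _ => t4 w),
        Finset.sum_congr rfl (fun w _ => t5 w), sum_ite_not_mem_card, hJc]
      simp
      omega
    rw [MoV]
    have hsup : ((Finset.univ.erase (0 : Fin 3)).sup fun c =>
        (finalVoters (SCEdges X) (SCScores (h+1)) (fwdS J' u0) fwdm c).card) = n + g + 1 := by
      apply le_antisymm
      · apply Finset.sup_le
        intro c hc
        rcases (show ∀ c : Fin 3, c ∈ Finset.univ.erase 0 → c = 1 ∨ c = 2 by decide) c hc
            with rfl | rfl
        · rw [card1]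
        · rw [card2]
      · calc n + g + 1 = (finalVoters (SCEdges X) (SCScores (h+1)) (fwdS J' u0) fwdm 1).card :=
              card1.symm
          _ ≤ _ := Finset.le_sup (f := fun c => (finalVoters (SCEdges X) (SCScores (h+1))
              (fwdS J' u0) fwdm c).card) (by decide)
    rw [card0, hsup]
    omega

lemma converse (hh : 1 ≤ h) (hhg : h ≤ g) (hcard : Fintype.card α = n)
    (hbud : totalBudget S m ≤ h + 1)
    (hmov : 0 < MoV (SCEdges X) (SCScores (h+1)) S m) :
    ∃ J : Finset (Fin g), J.card ≤ h ∧ ∀ z : α, ∃ x ∈ J, z ∈ X x := by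
  have hB : 2 ≤ h + 1 := by omega
  have hfin3 : ∀ i : Fin 3, i = 0 ∨ i = 1 ∨ i = 2 := by decide
  -- consequences of MoV > 0
  have hle1 : (finalVoters (SCEdges X) (SCScores (h+1)) S m 1).card
      ≤ (Finset.univ.erase (0:Fin 3)).sup
        fun c => (finalVoters (SCEdges X) (SCScores (h+1)) S m c).card :=
    Finset.le_sup (f := fun c => (finalVoters (SCEdges X) (SCScores (h+1)) S m c).card)
      (by decide)
  have hle2 : (finalVoters (SCEdges X) (SCScores (h+1)) S m 2).card
      ≤ (Finset.univ.erase (0:Fin 3)).sup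
        fun c => (finalVoters (SCEdges X) (SCScores (h+1)) S m c).card :=
    Finset.le_sup (f := fun c => (finalVoters (SCEdges X) (SCScores (h+1)) S m c).card)
      (by decide)
  rw [MoV] at hmov
  have hc1 : (finalVoters (SCEdges X) (SCScores (h+1)) S m 1).card
      < (finalVoters (SCEdges X) (SCScores (h+1)) S m 0).card := by omega
  have hc2 : (finalVoters (SCEdges X) (SCScores (h+1)) S m 2).card
      < (finalVoters (SCEdges X) (SCScores (h+1)) S m 0).card := by omega
  -- budget facts
  have hsplit := budget_split S m
  have habs : ∀ v : SCVoter α g n h,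
      (seedSum X S m v 0).natAbs + (seedSum X S m v 1).natAbs
        + (seedSum X S m v 2).natAbs ≤ h + 1 := by
    intro v
    have h1 := seedSum_abs_le X S m v
    rw [Fin.sum_univ_three] at h1
    omega
  have hM2a := M2_abs_le S m
  rw [Fin.sum_univ_three] at hM2a
  have hM3a := M3_abs_le S m
  rw [Fin.sum_univ_three] at hM3a
  -- |V*_0| ≤ n+g+2
  have hV0 : (finalVoters (SCEdges X) (SCScores (h+1)) S m 0).card ≤ n + g + 2 := by
    rw [card_eq_sum_W]
    have t1 : ∀ x : Fin g, (if (Sum.inl (Sum.inl x) : SCVoter α g n h) ∈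
        finalVoters (SCEdges X) (SCScores (h+1)) S m 0 then 1 else 0) = 0 := by
      intro x
      rw [if_neg]
      rw [vote_G1_c0 X S m (h+1) hB]
      have := habs (Sum.inl (Sum.inl x))
      omega
    have t2 : ∀ z : α, (if (Sum.inl (Sum.inr z) : SCVoter α g n h) ∈
        finalVoters (SCEdges X) (SCScores (h+1)) S m 0 then 1 else 0) = 0 := by
      intro z
      rw [if_neg]
      rw [vote_G1_c0 X S m (h+1) hB]
      have := habs (Sum.inl (Sum.inr z))
      omega
    have t3 : ∀ u : Fin (n+h+1), (if (Sum.inr (Sum.inl u) : SCVoter α g n h) ∈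
        finalVoters (SCEdges X) (SCScores (h+1)) S m 0 then 1 else 0) = 0 := by
      intro u
      rw [if_neg]
      rw [vote_G2_c0 X S m (h+1) hB]
      omega
    have t5 : ∀ w : Fin (g-h+1), (if (Sum.inr (Sum.inr (Sum.inr w)) : SCVoter α g n h) ∈
        finalVoters (SCEdges X) (SCScores (h+1)) S m 0 then 1 else 0) = 0 := by
      intro w
      rw [if_neg]
      rw [vote_G3B_c0 X S m (h+1) hB]
      omega
    have t4 : (∑ w : Fin (n+g+2), if (Sum.inr (Sum.inr (Sum.inl w)) : SCVoter α g n h) ∈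
        finalVoters (SCEdges X) (SCScores (h+1)) S m 0 then 1 else 0) ≤ n + g + 2 := by
      calc (∑ w : Fin (n+g+2), if (Sum.inr (Sum.inr (Sum.inl w)) : SCVoter α g n h) ∈
            finalVoters (SCEdges X) (SCScores (h+1)) S m 0 then 1 else 0)
          ≤ ∑ _w : Fin (n+g+2), 1 := Finset.sum_le_sum (fun w _ => by split_ifs <;> omega)
        _ = n + g + 2 := by simp
    rw [Finset.sum_congr rfl (fun x _ => t1 x), Finset.sum_congr rfl (fun z _ => t2 z),
      Finset.sum_congr rfl (fun u _ => t3 u), Finset.sum_congr rfl (fun w _ => t5 w)]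
    simp only [Finset.sum_const_zero]
    omega
  -- G3B all vote c1
  have hG3B1 : ∀ w : Fin (g-h+1), (Sum.inr (Sum.inr (Sum.inr w)) : SCVoter α g n h) ∈
      finalVoters (SCEdges X) (SCScores (h+1)) S m 1 := by
    intro w
    rw [vote_G3B_c1 X S m (h+1) hB]
    omega
  -- G2 does not vote c1
  have hG2not1 : 1 ≤ M2 S m 2 - M2 S m 1 := by
    by_contra hcon
    push_neg at hcon
    have hall : ∀ u : Fin (n+h+1), (Sum.inr (Sum.inl u) : SCVoter α g n h) ∈
        finalVoters (SCEdges X) (SCScores (h+1)) S m 1 := by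
      intro u
      rw [vote_G2_c1 X S m (h+1) hB]
      omega
    have hbig : n + g + 2 ≤ (finalVoters (SCEdges X) (SCScores (h+1)) S m 1).card := by
      rw [card_eq_sum_W]
      have e3 : (∑ u : Fin (n+h+1), if (Sum.inr (Sum.inl u) : SCVoter α g n h) ∈
          finalVoters (SCEdges X) (SCScores (h+1)) S m 1 then 1 else 0) = n + h + 1 := by
        rw [Finset.sum_congr rfl (fun u _ => if_pos (hall u))]
        simp
      have e5 : (∑ w : Fin (g-h+1), if (Sum.inr (Sum.inr (Sum.inr w)) : SCVoter α g n h) ∈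
          finalVoters (SCEdges X) (SCScores (h+1)) S m 1 then 1 else 0) = g - h + 1 := by
        rw [Finset.sum_congr rfl (fun w _ => if_pos (hG3B1 w))]
        simp
      rw [e3, e5]
      omega
    omega
  -- C2 ≥ 1
  have hC2 : 1 ≤ C2 S m := by omega
  -- G2 all vote c2
  have hG2v2 : ∀ u : Fin (n+h+1), (Sum.inr (Sum.inl u) : SCVoter α g n h) ∈
      finalVoters (SCEdges X) (SCScores (h+1)) S m 2 := by
    intro u
    rw [vote_G2_c2 X S m (h+1) hB]
    constructor <;> omega
  -- the candidate cover and the element seeds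
  set J : Finset (Fin g) := Finset.univ.filter
    (fun x => (Sum.inl (Sum.inl x) : SCVoter α g n h) ∈ S ∧ m (Sum.inl (Sum.inl x)) ≠ 0)
    with hJdef
  set E : Finset α := Finset.univ.filter
    (fun z => (Sum.inl (Sum.inr z) : SCVoter α g n h) ∈ S ∧ m (Sum.inl (Sum.inr z)) ≠ 0)
    with hEdef
  have hJle : J.card ≤ CSet S m := by
    rw [hJdef, Finset.card_filter, CSet]
    apply Finset.sum_le_sum
    intro x _
    by_cases hx : (Sum.inl (Sum.inl x) : SCVoter α g n h) ∈ S ∧ m (Sum.inl (Sum.inl x)) ≠ 0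
    · rw [if_pos hx, if_pos hx.1]
      obtain ⟨i, hi⟩ := Function.ne_iff.mp hx.2
      simp only [Pi.zero_apply] at hi
      simp only [cost]
      rw [Fin.sum_univ_three]
      rcases hfin3 i with rfl | rfl | rfl <;> omega
    · rw [if_neg hx]
      exact Nat.zero_le _
  have hEle : E.card ≤ CElem S m := by
    rw [hEdef, Finset.card_filter, CElem]
    apply Finset.sum_le_sum
    intro z _
    by_cases hz : (Sum.inl (Sum.inr z) : SCVoter α g n h) ∈ S ∧ m (Sum.inl (Sum.inr z)) ≠ 0
    · rw [if_pos hz, if_pos hz.1]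
      obtain ⟨i, hi⟩ := Function.ne_iff.mp hz.2
      simp only [Pi.zero_apply] at hi
      simp only [cost]
      rw [Fin.sum_univ_three]
      rcases hfin3 i with rfl | rfl | rfl <;> omega
    · rw [if_neg hz]
      exact Nat.zero_le _
  -- stopped set nodes belong to J
  have hstopSet : ∀ x : Fin g, (Sum.inl (Sum.inl x) : SCVoter α g n h) ∉
      finalVoters (SCEdges X) (SCScores (h+1)) S m 2 → x ∈ J := by
    intro x hx
    simp only [vote_G1_c2 X S m (h+1) hB] at hx
    have hr : 1 ≤ seedSum X S m (Sum.inl (Sum.inl x)) 1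
        - seedSum X S m (Sum.inl (Sum.inl x)) 2 := by
      have := habs (Sum.inl (Sum.inl x))
      omega
    by_cases hxs : (Sum.inl (Sum.inl x) : SCVoter α g n h) ∈ S
    · refine Finset.mem_filter.2 ⟨Finset.mem_univ _, hxs, ?_⟩
      intro h0
      rw [seedSum_set X S m, seedSum_set X S m, if_pos hxs, if_pos hxs, h0] at hr
      simp at hr
    · exfalso
      rw [seedSum_set X S m, seedSum_set X S m, if_neg hxs, if_neg hxs] at hr
      omega
  -- stopped elements are covered (or are element seeds)
  have hstopElem : ∀ z : α, (Sum.inl (Sum.inr z) : SCVoter α g n h) ∉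
      finalVoters (SCEdges X) (SCScores (h+1)) S m 2 → z ∈ E ∨ ∃ x ∈ J, z ∈ X x := by
    intro z hz
    simp only [vote_G1_c2 X S m (h+1) hB] at hz
    have hr : 1 ≤ seedSum X S m (Sum.inl (Sum.inr z)) 1
        - seedSum X S m (Sum.inl (Sum.inr z)) 2 := by
      have := habs (Sum.inl (Sum.inr z))
      omega
    by_contra hcon
    push_neg at hcon
    obtain ⟨hzE, hJx⟩ := hcon
    have hzero : ∀ i : Fin 3, seedSum X S m (Sum.inl (Sum.inr z)) i = 0 := by
      intro i
      rw [seedSum_elem X S m]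
      have hfirst : (if (Sum.inl (Sum.inr z) : SCVoter α g n h) ∈ S
          then m (Sum.inl (Sum.inr z)) i else 0) = 0 := by
        split_ifs with hs
        · by_cases hm : m (Sum.inl (Sum.inr z)) = 0
          · rw [hm, Pi.zero_apply]
          · exact absurd (Finset.mem_filter.2 ⟨Finset.mem_univ _, hs, hm⟩) hzE
        · rfl
      rw [hfirst, zero_add]
      apply Finset.sum_eq_zero
      intro x _
      split_ifs with hsx
      · by_cases hm : m (Sum.inl (Sum.inl x)) = 0
        · rw [hm, Pi.zero_apply]
        · exact absurd hsx.2
            (hJx x (Finset.mem_filter.2 ⟨Finset.mem_univ _, hsx.1, hm⟩))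
      · rfl
    rw [hzero 1, hzero 2] at hr
    omega
  -- counting
  have hcard2 := card_eq_sum_W (finalVoters (SCEdges X) (SCScores (h+1)) S m 2)
  have e3 : (∑ u : Fin (n+h+1), if (Sum.inr (Sum.inl u) : SCVoter α g n h) ∈
      finalVoters (SCEdges X) (SCScores (h+1)) S m 2 then 1 else 0) = n + h + 1 := by
    rw [Finset.sum_congr rfl (fun u _ => if_pos (hG2v2 u))]
    simp
  rw [e3] at hcard2
  have eNSet : (∑ x : Fin g, if (Sum.inl (Sum.inl x) : SCVoter α g n h) ∈
      finalVoters (SCEdges X) (SCScores (h+1)) S m 2 then 1 else 0)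
      = (Finset.univ.filter (fun x : Fin g => (Sum.inl (Sum.inl x) : SCVoter α g n h) ∈
          finalVoters (SCEdges X) (SCScores (h+1)) S m 2)).card :=
    (Finset.card_filter _ _).symm
  have eNElem : (∑ z : α, if (Sum.inl (Sum.inr z) : SCVoter α g n h) ∈
      finalVoters (SCEdges X) (SCScores (h+1)) S m 2 then 1 else 0)
      = (Finset.univ.filter (fun z : α => (Sum.inl (Sum.inr z) : SCVoter α g n h) ∈
          finalVoters (SCEdges X) (SCScores (h+1)) S m 2)).card :=
    (Finset.card_filter _ _).symm
  rw [eNSet, eNElem] at hcard2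
  -- set-node counting : g ≤ voting + |J|
  have hgsplit := Finset.card_filter_add_card_filter_not
    (s := (Finset.univ : Finset (Fin g)))
    (p := fun x : Fin g => (Sum.inl (Sum.inl x) : SCVoter α g n h) ∈
      finalVoters (SCEdges X) (SCScores (h+1)) S m 2)
  have hsubJ : (Finset.univ.filter (fun x : Fin g =>
      ¬ ((Sum.inl (Sum.inl x) : SCVoter α g n h) ∈
        finalVoters (SCEdges X) (SCScores (h+1)) S m 2))).card ≤ J.card := by
    apply Finset.card_le_card
    intro x hx
    exact hstopSet x (Finset.mem_filter.1 hx).2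
  rw [Finset.card_univ, Fintype.card_fin] at hgsplit
  -- element counting
  have hesplit := Finset.card_filter_add_card_filter_not
    (s := (Finset.univ : Finset α))
    (p := fun z : α => (Sum.inl (Sum.inr z) : SCVoter α g n h) ∈
      finalVoters (SCEdges X) (SCScores (h+1)) S m 2)
  rw [Finset.card_univ, hcard] at hesplit
  -- final arithmetic
  have hJcard : J.card ≤ h := by omega
  have hNElem0 : (Finset.univ.filter (fun z : α => (Sum.inl (Sum.inr z) : SCVoter α g n h) ∈
      finalVoters (SCEdges X) (SCScores (h+1)) S m 2)).card = 0 := by omega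
  have hE0 : E = ∅ := Finset.card_eq_zero.1 (by omega)
  refine ⟨J, hJcard, ?_⟩
  intro z
  have hznot : (Sum.inl (Sum.inr z) : SCVoter α g n h) ∉
      finalVoters (SCEdges X) (SCScores (h+1)) S m 2 := by
    intro hmem
    have hzmem : z ∈ Finset.univ.filter (fun z : α =>
        (Sum.inl (Sum.inr z) : SCVoter α g n h) ∈
          finalVoters (SCEdges X) (SCScores (h+1)) S m 2) :=
      Finset.mem_filter.2 ⟨Finset.mem_univ _, hmem⟩
    rw [Finset.card_eq_zero.1 hNElem0] at hzmem
    exact absurd hzmem (Finset.notMem_empty z)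
  rcases hstopElem z hznot with hzE | hcov
  · rw [hE0] at hzE
    exact absurd hzE (Finset.notMem_empty z)
  · exact hcov

end SCAux


/-- There is a seeding (S, M) of budget at most B = h+1 achieving MoV > 0 if and only if
the Set-Cover instance admits a cover of size at most h. -/
theorem seeding_positive_MoV_iff_setCover {α : Type*} [Fintype α] [DecidableEq α]
    (n g h : ℕ) (hcard : Fintype.card α = n) (hh : 1 ≤ h) (hhg : h ≤ g)
    (X : Fin g → Finset α) :
    (∃ (S : Set (SCVoter α g n h)) (m : SCVoter α g n h → Fin 3 → ℤ),
        totalBudget S m ≤ h + 1 ∧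
        0 < MoV (SCEdges X) (SCScores (h + 1)) S m) ↔
    (∃ J : Finset (Fin g), J.card ≤ h ∧ ∀ z : α, ∃ x ∈ J, z ∈ X x) := by
  constructor
  · rintro ⟨S, m, hbud, hmov⟩
    exact SCAux.converse X S m hh hhg hcard hbud hmov
  · rintro ⟨J, hJcard, hJcov⟩
    obtain ⟨J', hJJ', hJ'univ, hJ'card⟩ := Finset.exists_subsuperset_card_eq
      (Finset.subset_univ J) hJcard (by simpa using hhg)
    have u0 : Fin (n + h + 1) := ⟨0, by omega⟩
    obtain ⟨hb, hm⟩ := SCAux.fwd_correct X hh hhg hcard J' u0 hJ'card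
      (fun z => by
        obtain ⟨x, hxJ, hxX⟩ := hJcov z
        exact ⟨x, hJJ' hxJ, hxX⟩)
    exact ⟨SCAux.fwdS J' u0, SCAux.fwdm, by omega, hm⟩

end SetCoverSeeding
end

section
/- Let V be a finite set and f : 𝒫(V) → ℝ be monotone (f(A) ≤ f(B) whenever A ⊆ B ⊆ V), submodular (f(A∪{x}) − f(A) ≥ f(B∪{x}) − f(B) whenever A ⊆ B ⊆ V and x ∈ V∖B), and satisfy f(∅) = 0. Let 1 ≤ k ≤ B ≤ |V|, let S'' ⊆ V with |S''| = k be such that f(S'') ≥ f(T) for every T ⊆ V with |T| = k, and let S' ⊆ V be any subset with |S'| = B. Then k·f(S') ≤ B·f(S''). -/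
private lemma sum_erase_marginals {V : Type*} [DecidableEq V]
    (f : Finset V → ℝ)
    (hsub : ∀ (A B : Finset V) (x : V), A ⊆ B → x ∉ B →
      f (insert x B) - f B ≤ f (insert x A) - f A)
    (S : Finset V) :
    ∑ x ∈ S, (f S - f (S.erase x)) ≤ f S - f ∅ := by
  classical
  induction S using Finset.induction_on with
  | empty => simp
  | @insert a S0 ha ih =>
    rw [Finset.sum_insert ha]
    have h1 : ∀ x ∈ S0, f (insert a S0) - f ((insert a S0).erase x)
        ≤ f S0 - f (S0.erase x) := by
      intro x hx
      have hxa : x ≠ a := by rintro rfl; exact ha hx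
      have hxe : x ∉ (insert a S0).erase x := Finset.notMem_erase _ _
      have hsubset : S0.erase x ⊆ (insert a S0).erase x := by
        intro y hy
        rw [Finset.mem_erase] at hy ⊢
        exact ⟨hy.1, Finset.mem_insert_of_mem hy.2⟩
      have h := hsub (S0.erase x) ((insert a S0).erase x) x hsubset hxe
      rwa [Finset.insert_erase (Finset.mem_insert_of_mem hx),
        Finset.insert_erase hx] at h
    have h2 : ∑ x ∈ S0, (f (insert a S0) - f ((insert a S0).erase x))
        ≤ ∑ x ∈ S0, (f S0 - f (S0.erase x)) := Finset.sum_le_sum h1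
    have h3 : f (insert a S0) - f ((insert a S0).erase a) = f (insert a S0) - f S0 := by
      rw [Finset.erase_insert ha]
    linarith [ih]

private lemma exists_good_subset {V : Type*} [DecidableEq V]
    (f : Finset V → ℝ)
    (hsub : ∀ (A B : Finset V) (x : V), A ⊆ B → x ∉ B →
      f (insert x B) - f B ≤ f (insert x A) - f A)
    (hempty : f ∅ = 0)
    (k : ℕ) (hk : 1 ≤ k) :
    ∀ n : ℕ, ∀ S : Finset V, S.card = k + n →
      ∃ T : Finset V, T ⊆ S ∧ T.card = k ∧ (k : ℝ) * f S ≤ ((k + n : ℕ) : ℝ) * f T := by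
  intro n
  induction n with
  | zero =>
    intro S hS
    exact ⟨S, Finset.Subset.refl S, by simpa using hS, le_of_eq (by norm_num)⟩
  | succ n ih =>
    intro S hS
    have hSne : S.Nonempty := by
      rw [← Finset.card_pos, hS]; omega
    -- find an element with small removal marginal
    have hsum : ∑ x ∈ S, (f S - f (S.erase x)) ≤ ∑ x ∈ S, f S / (S.card : ℝ) := by
      have := sum_erase_marginals f hsub S
      rw [Finset.sum_const, nsmul_eq_mul]
      have hcardpos : (0:ℝ) < (S.card : ℝ) := by
        have : 0 < S.card := Finset.card_pos.mpr hSne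
        exact_mod_cast this
      rw [mul_div_cancel₀ _ (ne_of_gt hcardpos)]
      linarith [this, hempty ▸ this]
    obtain ⟨x, hxS, hx⟩ := Finset.exists_le_of_sum_le hSne hsum
    set S1 := S.erase x with hS1
    have hS1card : S1.card = k + n := by
      rw [hS1, Finset.card_erase_of_mem hxS, hS]; omega
    obtain ⟨T, hTsub, hTcard, hT⟩ := ih S1 hS1card
    refine ⟨T, hTsub.trans (Finset.erase_subset _ _), hTcard, ?_⟩
    have hcard : (S.card : ℝ) = (k : ℝ) + (n : ℝ) + 1 := by
      rw [hS]; push_cast; ring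
    have hpos : (0:ℝ) < (k : ℝ) + (n : ℝ) := by
      have : 0 < k + n := by omega
      exact_mod_cast this
    have hpos1 : (0:ℝ) < (k : ℝ) + (n : ℝ) + 1 := by linarith
    -- from hx : f S - f S1 ≤ f S / S.card
    have hx2 : f S - f S1 ≤ f S / ((k:ℝ) + n + 1) := hcard ▸ hx
    have hx' : ((k:ℝ) + n + 1) * (f S - f S1) ≤ f S := by
      have := (le_div_iff₀ hpos1).mp hx2
      linarith
    -- ⇒ (k+n) f S ≤ (k+n+1) f S1
    have step : ((k:ℝ) + n) * f S ≤ ((k:ℝ) + n + 1) * f S1 := by nlinarith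
    have hT' : (k : ℝ) * f S1 ≤ ((k:ℝ) + n) * f T := by
      have : ((k + n : ℕ) : ℝ) = (k:ℝ) + n := by push_cast; ring
      linarith [this ▸ hT]
    have hkpos : (0:ℝ) ≤ (k:ℝ) := by positivity
    have goal : (k : ℝ) * f S ≤ ((k:ℝ) + n + 1) * f T := by
      nlinarith [mul_le_mul_of_nonneg_left step hkpos,
        mul_le_mul_of_nonneg_left hT' (le_of_lt hpos1)]
    calc (k : ℝ) * f S ≤ ((k:ℝ) + n + 1) * f T := goal
    _ = ((k + (n+1) : ℕ) : ℝ) * f T := by push_cast; ring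

/-- Scaling inequality between optima of a monotone submodular function over
cardinality-constrained families: if `S''` is an optimal set of size `k` and `S'` is any
set of size `B ≥ k`, then `k·f(S') ≤ B·f(S'')`. -/
theorem submodular_cardinality_scaling {V : Type*} [Fintype V] [DecidableEq V]
    (f : Finset V → ℝ)
    (hmono : ∀ A B : Finset V, A ⊆ B → f A ≤ f B)
    (hsub : ∀ (A B : Finset V) (x : V), A ⊆ B → x ∉ B →
      f (insert x B) - f B ≤ f (insert x A) - f A)
    (hempty : f ∅ = 0)
    (k B : ℕ) (hk : 1 ≤ k) (hkB : k ≤ B) (hB : B ≤ Fintype.card V)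
    (S'' : Finset V) (hS''card : S''.card = k)
    (hS''opt : ∀ T : Finset V, T.card = k → f T ≤ f S'')
    (S' : Finset V) (hS'card : S'.card = B) :
    (k : ℝ) * f S' ≤ (B : ℝ) * f S'' := by
  obtain ⟨n, rfl⟩ : ∃ n, B = k + n := ⟨B - k, by omega⟩
  obtain ⟨T, hTsub, hTcard, hT⟩ :=
    exists_good_subset f hsub hempty k hk n S' (by omega)
  have hTle : f T ≤ f S'' := hS''opt T hTcard
  have hBpos : (0:ℝ) ≤ ((k + n : ℕ) : ℝ) := by positivity
  calc (k : ℝ) * f S' ≤ ((k + n : ℕ) : ℝ) * f T := hT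
  _ ≤ ((k + n : ℕ) : ℝ) * f S'' := by
      exact mul_le_mul_of_nonneg_left hTle hBpos
end

section
/- In the deterministic election model, let δ ∈ ℕ with δ ≥ 1 and δ ≥ π_v(i) − π_v(0) for every voter v and every candidate index i. Suppose every seed s ∈ S sends the message m_s with m_s(0) = δ and m_s(i) = 0 for all i ≠ 0, and let infl denote the set of influenced voters. Then after the diffusion every influenced voter votes for c_0; more precisely V*_{c_0} = V_{c_0} ∪ infl and V*_c = V_c ∖ infl for every candidate c ≠ c_0; consequently ΔMoV^S(S,M) ≥ |infl ∖ V_{c_0}| ≥ 0. -/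
open scoped Classical

theorem aux_main_delta {V : Type*} [Fintype V] {k : ℕ} [NeZero k]
    (Es : Set (V × V)) (π : V → Fin k → ℕ)
    (hinj : ∀ v : V, Function.Injective (π v))
    (S : Set V) (δ : ℕ) (hδ1 : 1 ≤ δ)
    (hδ : ∀ (v : V) (i : Fin k), (π v i : ℤ) - (π v 0 : ℤ) ≤ (δ : ℤ))
    (m : V → Fin k → ℤ)
    (hm0 : ∀ s ∈ S, m s 0 = (δ : ℤ))
    (hmi : ∀ s ∈ S, ∀ i : Fin k, i ≠ 0 → m s i = 0) :
    finalVoters Es π S m 0 = initVoters π 0 ∪ influenced Es S ∧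
    (∀ c : Fin k, c ≠ 0 → finalVoters Es π S m c = initVoters π c \ influenced Es S) := by
  classical
  have hepspos : 0 < eps π := by
    unfold eps; positivity
  have heps_lt : ∀ (v : V) {i j : Fin k}, i ≠ j → eps π < 1 := by
    intro v i j hij
    have h1 : π v i ≤ Finset.univ.sup fun v => Finset.univ.sup fun i => π v i :=
      le_trans (Finset.le_sup (Finset.mem_univ i))
        (Finset.le_sup (f := fun v => Finset.univ.sup fun i => π v i) (Finset.mem_univ v))
    have h2 : π v j ≤ Finset.univ.sup fun v => Finset.univ.sup fun i => π v i :=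
      le_trans (Finset.le_sup (Finset.mem_univ j))
        (Finset.le_sup (f := fun v => Finset.univ.sup fun i => π v i) (Finset.mem_univ v))
    have hne : π v i ≠ π v j := fun h => hij (hinj v h)
    have hM1 : 1 ≤ (Finset.univ.sup fun v => Finset.univ.sup fun i => π v i) := by omega
    unfold eps
    rw [div_lt_one (by positivity)]
    have : (1:ℚ) ≤ ((Finset.univ.sup fun v => Finset.univ.sup fun i => π v i : ℕ) : ℚ) := by
      exact_mod_cast hM1
    linarith
  have hTne : ∀ (i : Fin k), i ≠ 0 → ∀ v, finalScore Es π S m v i = (1 - eps π) * π v i := by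
    intro i hi v
    unfold finalScore
    rw [Finset.sum_eq_zero, add_zero]
    intro s hs
    simp only [Finset.mem_filter] at hs
    rw [hmi s hs.2.1 i hi]
    simp
  have hT0 : ∀ v, finalScore Es π S m v 0 =
      (1 - eps π) * π v 0 +
        ((Finset.univ.filter fun s => s ∈ S ∧ Reaches Es s v).card : ℚ) * δ := by
    intro v
    unfold finalScore
    congr 1
    have hc : ∀ s ∈ Finset.univ.filter fun s => s ∈ S ∧ Reaches Es s v,
        ((m s 0 : ℚ)) = (δ : ℚ) := by
      intro s hs
      simp only [Finset.mem_filter] at hs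
      rw [hm0 s hs.2.1]
      push_cast; ring
    rw [Finset.sum_congr rfl hc, Finset.sum_const, nsmul_eq_mul]
  have hnot : ∀ v, v ∉ influenced Es S → ∀ i,
      finalScore Es π S m v i = (1 - eps π) * π v i := by
    intro v hv i
    have hf : (Finset.univ.filter fun s => s ∈ S ∧ Reaches Es s v) = ∅ := by
      rw [Finset.filter_eq_empty_iff]
      intro s _
      simp only [influenced, Finset.mem_filter, Finset.mem_univ, true_and] at hv
      exact fun h => hv ⟨s, h.1, h.2⟩
    unfold finalScore
    rw [hf, Finset.sum_empty, add_zero]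
  have hmemF : ∀ v c, v ∈ finalVoters Es π S m c ↔
      ∀ j, j ≠ c → finalScore Es π S m v j < finalScore Es π S m v c := by
    intro v c; simp [finalVoters]
  have hmemI : ∀ v c, v ∈ initVoters π c ↔ ∀ j, j ≠ c → π v j < π v c := by
    intro v c; simp [initVoters]
  have hequiv : ∀ v, v ∉ influenced Es S → ∀ c,
      (v ∈ finalVoters Es π S m c ↔ v ∈ initVoters π c) := by
    intro v hv c
    rw [hmemF, hmemI]
    constructor
    · intro h j hj
      have h2 := h j hj
      rw [hnot v hv, hnot v hv] at h2
      have hlt := heps_lt v hj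
      have h3 : (0:ℚ) ≤ 1 - eps π := by linarith
      have := lt_of_mul_lt_mul_left h2 h3
      exact_mod_cast this
    · intro h j hj
      have h2 := h j hj
      rw [hnot v hv, hnot v hv]
      have hlt := heps_lt v hj
      have h3 : (0:ℚ) < 1 - eps π := by linarith
      have h4 : (π v j : ℚ) < (π v c : ℚ) := by exact_mod_cast h2
      exact mul_lt_mul_of_pos_left h4 h3
  have hinfl0 : ∀ v, v ∈ influenced Es S → v ∈ finalVoters Es π S m 0 := by
    intro v hv
    simp only [influenced, Finset.mem_filter, Finset.mem_univ, true_and] at hv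
    obtain ⟨s, hsS, hsv⟩ := hv
    have hn : 1 ≤ (Finset.univ.filter fun s => s ∈ S ∧ Reaches Es s v).card :=
      Finset.card_pos.mpr ⟨s, by simp [hsS, hsv]⟩
    rw [hmemF]
    intro j hj
    rw [hTne j hj, hT0]
    have hn1 : (1:ℚ) ≤ ((Finset.univ.filter fun s => s ∈ S ∧ Reaches Es s v).card : ℚ) := by
      exact_mod_cast hn
    have hδ1' : (1:ℚ) ≤ (δ:ℚ) := by exact_mod_cast hδ1
    have hab : (π v j : ℚ) - (π v 0 : ℚ) ≤ (δ:ℚ) := by exact_mod_cast hδ v j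
    have hεlt := heps_lt v hj
    set n : ℚ := ((Finset.univ.filter fun s => s ∈ S ∧ Reaches Es s v).card : ℚ)
    set a : ℚ := (π v j : ℚ) with ha'
    set b : ℚ := (π v 0 : ℚ) with hb'
    have ha : 0 ≤ a := by rw [ha']; positivity
    have hb : 0 ≤ b := by rw [hb']; positivity
    rcases le_or_gt a b with hle | hgt
    · have h1 : (1 - eps π) * a ≤ (1 - eps π) * b :=
        mul_le_mul_of_nonneg_left hle (by linarith)
      nlinarith
    · have h1 : (1 - eps π) * (a - b) < a - b := by
        nlinarith [mul_pos hepspos (sub_pos.mpr hgt)]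
      have h2 : (δ:ℚ) ≤ n * δ := by nlinarith
      nlinarith
  constructor
  · ext v
    by_cases hv : v ∈ influenced Es S
    · simp [Finset.mem_union, hv, hinfl0 v hv]
    · simp [Finset.mem_union, hv, hequiv v hv 0]
  · intro c hc
    ext v
    rw [Finset.mem_sdiff]
    by_cases hv : v ∈ influenced Es S
    · simp only [hv, not_true_eq_false, and_false, iff_false]
      intro hvc
      have h0 := (hmemF v 0).mp (hinfl0 v hv) c hc
      have hc0 := (hmemF v c).mp hvc 0 (Ne.symm hc)
      exact absurd hc0 (lt_asymm h0)
    · simp [hv, hequiv v hv c]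

/-- If every seed sends the message with δ positive news articles on c₀ (and nothing else),
where δ ≥ 1 and δ ≥ π_v(i) − π_v(0) for all v, i, then every influenced voter ends up voting
for c₀: V*₀ = V₀ ∪ infl and V*_c = V_c ∖ infl for c ≠ 0, whence
ΔMoV^S(S,M) ≥ |infl ∖ V₀| ≥ 0. -/
theorem seeding_with_delta_message_converts_influenced {V : Type*} [Fintype V]
    {k : ℕ} [NeZero k]
    (Es : Set (V × V)) (π : V → Fin k → ℕ)
    (hinj : ∀ v : V, Function.Injective (π v))
    (S : Set V) (δ : ℕ) (hδ1 : 1 ≤ δ)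
    (hδ : ∀ (v : V) (i : Fin k), (π v i : ℤ) - (π v 0 : ℤ) ≤ (δ : ℤ))
    (m : V → Fin k → ℤ)
    (hm0 : ∀ s ∈ S, m s 0 = (δ : ℤ))
    (hmi : ∀ s ∈ S, ∀ i : Fin k, i ≠ 0 → m s i = 0) :
    finalVoters Es π S m 0 = initVoters π 0 ∪ influenced Es S ∧
    (∀ c : Fin k, c ≠ 0 → finalVoters Es π S m c = initVoters π c \ influenced Es S) ∧
    (0 : ℤ) ≤ ((influenced Es S \ initVoters π 0).card : ℤ) ∧
    ((influenced Es S \ initVoters π 0).card : ℤ) ≤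
      MoV Es π S m - MoV Es π (∅ : Set V) m := by
  classical
  obtain ⟨h1, h2⟩ := aux_main_delta Es π hinj S δ hδ1 hδ m hm0 hmi
  obtain ⟨h1e, h2e⟩ := aux_main_delta Es π hinj (∅ : Set V) δ hδ1 hδ m
    (by intro s hs; exact absurd hs (Set.notMem_empty s))
    (by intro s hs; exact absurd hs (Set.notMem_empty s))
  have hie : influenced Es (∅ : Set V) = ∅ := by
    simp [influenced]
  have hfe : ∀ c : Fin k, finalVoters Es π (∅ : Set V) m c = initVoters π c := by
    intro c
    by_cases hc : c = 0
    · subst hc; rw [h1e, hie, Finset.union_empty]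
    · rw [h2e c hc, hie, Finset.sdiff_empty]
  refine ⟨h1, h2, Int.ofNat_nonneg _, ?_⟩
  have hsup_le : ((Finset.univ.erase (0 : Fin k)).sup
        fun c => (finalVoters Es π S m c).card) ≤
      ((Finset.univ.erase (0 : Fin k)).sup
        fun c => (finalVoters Es π (∅ : Set V) m c).card) := by
    apply Finset.sup_mono_fun
    intro c hc
    rw [h2 c (Finset.ne_of_mem_erase hc), hfe c]
    exact Finset.card_le_card Finset.sdiff_subset
  have hcard : (finalVoters Es π S m 0).card =
      (finalVoters Es π (∅ : Set V) m 0).card +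
        (influenced Es S \ initVoters π 0).card := by
    rw [h1, hfe 0]
    have h := Finset.card_sdiff_add_card (s := influenced Es S) (t := initVoters π 0)
    rw [Finset.union_comm] at h
    omega
  simp only [MoV]
  omega
end

section
/- Let G=(X,N) be an undirected graph. Construct the deterministic election instance with two candidates c_0, c_1: a voter v_x with score vector ⟨1,0⟩ for each vertex x ∈ X, a voter v_e with score vector ⟨0,2⟩ for each edge e ∈ N, and a directed edge from v_x to v_e whenever x is an endpoint of e. For any X' ⊆ X, let the seed set be S' = {v_x : x ∈ X'}, each seed sending the message m with m(0)=1 and m(1)=0. Then ΔMoV^S(S',M) = 2·e(X'), where e(X') is the number of edges of G with both endpoints in X'. -/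
open scoped Classical

section DkS

variable {X : Type*} [Fintype X] [DecidableEq X] (G : SimpleGraph X)
  [DecidableRel G.Adj] [Fintype G.edgeSet]

/-- Voters: a node for each vertex of `G` and a node for each edge of `G`. -/
abbrev DkSVoter := X ⊕ G.edgeSet

/-- A directed edge from `v_x` to `v_e` whenever `x` is an endpoint of `e`. -/
def DkSEdges : Set (DkSVoter G × DkSVoter G) :=
  { p | ∃ (x : X) (e : G.edgeSet), x ∈ (e : Sym2 X) ∧
      p.1 = Sum.inl x ∧ p.2 = Sum.inr e }

/-- Scores: vertex-nodes have ⟨1,0⟩, edge-nodes have ⟨0,2⟩. -/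
def DkSScores : DkSVoter G → Fin 2 → ℕ
  | Sum.inl _ => ![1, 0]
  | Sum.inr _ => ![0, 2]

/-- Seed set `{v_x : x ∈ X'}`. -/
def DkSSeeds (X' : Finset X) : Set (DkSVoter G) := { v | ∃ x ∈ X', v = Sum.inl x }

/-- Every seed sends the message (+1 on c₀, nothing on c₁). -/
def DkSMsg : DkSVoter G → Fin 2 → ℤ := fun _ => ![1, 0]

/-- e(X'): the number of edges of `G` with both endpoints in `X'`. -/
def edgesWithin (X' : Finset X) : ℕ :=
  (Finset.univ.filter fun e : G.edgeSet => ∀ x ∈ (e : Sym2 X), x ∈ X').card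

set_option linter.unusedSectionVars false in
lemma reaches_from_inr {e : G.edgeSet} {v : DkSVoter G}
    (h : Reaches (DkSEdges G) (Sum.inr e) v) : v = Sum.inr e := by
  induction h with
  | refl => rfl
  | tail _ hstep ih =>
      subst ih
      rcases hstep with ⟨x, e', _, h1, _⟩
      exact absurd h1 (by simp)

lemma reaches_iff {s v : DkSVoter G} :
    Reaches (DkSEdges G) s v ↔ s = v ∨ ∃ (x : X) (e : G.edgeSet),
      s = Sum.inl x ∧ v = Sum.inr e ∧ x ∈ (e : Sym2 X) := by
  constructor
  · intro h
    rcases Relation.ReflTransGen.cases_head h with rfl | ⟨c, hstep, htail⟩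
    · exact Or.inl rfl
    · rcases hstep with ⟨x, e, hx, h1, h2⟩
      simp only at h1 h2
      subst h2
      have := reaches_from_inr G htail
      exact Or.inr ⟨x, e, h1, this, hx⟩
  · rintro (rfl | ⟨x, e, rfl, rfl, hx⟩)
    · exact Relation.ReflTransGen.refl
    · exact Relation.ReflTransGen.single ⟨x, e, hx, rfl, rfl⟩

lemma seedFilter_inl (X' : Finset X) (x : X) :
    Finset.univ.filter (fun s => s ∈ DkSSeeds G X' ∧ Reaches (DkSEdges G) s (Sum.inl x))
      = if x ∈ X' then {Sum.inl x} else (∅ : Finset (DkSVoter G)) := by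
  ext s
  split_ifs with h <;> simp [DkSSeeds, reaches_iff] <;> aesop

lemma seedFilter_inr (X' : Finset X) (e : G.edgeSet) :
    Finset.univ.filter (fun s => s ∈ DkSSeeds G X' ∧ Reaches (DkSEdges G) s (Sum.inr e))
      = (X'.filter (fun x => x ∈ (e : Sym2 X))).image Sum.inl := by
  ext s
  simp only [Finset.mem_filter, Finset.mem_univ, true_and, Finset.mem_image,
    DkSSeeds, Set.mem_setOf_eq, reaches_iff]
  aesop

lemma score_sup_le :
    (Finset.univ.sup fun v : DkSVoter G => Finset.univ.sup fun i => DkSScores G v i) ≤ 2 := by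
  apply Finset.sup_le; intro v _
  apply Finset.sup_le; intro i _
  rcases v with x | e <;> fin_cases i <;> simp [DkSScores]

lemma eps_eq_third (e : G.edgeSet) : eps (DkSScores G) = 1/3 := by
  have h2 : (Finset.univ.sup fun v : DkSVoter G => Finset.univ.sup fun i => DkSScores G v i) = 2 := by
    refine le_antisymm (score_sup_le G) ?_
    calc (2:ℕ) = DkSScores G (Sum.inr e) 1 := by simp [DkSScores]
    _ ≤ Finset.univ.sup fun i => DkSScores G (Sum.inr e) i :=
        Finset.le_sup (Finset.mem_univ _)
    _ ≤ _ := Finset.le_sup (f := fun v => Finset.univ.sup fun i => DkSScores G v i) (Finset.mem_univ _)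
  rw [eps, h2]; norm_num

lemma one_sub_eps_pos (x : X) : 0 < 1 - eps (DkSScores G) := by
  have h1 : (1:ℕ) ≤ (Finset.univ.sup fun v : DkSVoter G => Finset.univ.sup fun i => DkSScores G v i) := by
    calc (1:ℕ) = DkSScores G (Sum.inl x) 0 := by simp [DkSScores]
    _ ≤ Finset.univ.sup fun i => DkSScores G (Sum.inl x) i := Finset.le_sup (Finset.mem_univ _)
    _ ≤ _ := Finset.le_sup (f := fun v => Finset.univ.sup fun i => DkSScores G v i) (Finset.mem_univ _)
  rw [eps]
  have h1' : (2:ℚ) ≤ 1 + ((Finset.univ.sup fun v : DkSVoter G => Finset.univ.sup fun i => DkSScores G v i : ℕ) : ℚ) := by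
    have : (1:ℚ) ≤ _ := Nat.one_le_cast.mpr h1
    linarith
  have : (1:ℚ) / (1 + ((Finset.univ.sup fun v : DkSVoter G => Finset.univ.sup fun i => DkSScores G v i : ℕ) : ℚ)) ≤ 1/2 :=
    one_div_le_one_div_of_le (by norm_num) h1'
  linarith

lemma msg_sum (S : Set (DkSVoter G)) (v : DkSVoter G) (i : Fin 2) :
    ∑ s ∈ Finset.univ.filter (fun s => s ∈ S ∧ Reaches (DkSEdges G) s v), (DkSMsg G s i : ℚ)
      = ((Finset.univ.filter (fun s => s ∈ S ∧ Reaches (DkSEdges G) s v)).card : ℚ)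
          * ((![1,0] i : ℤ) : ℚ) := by
  simp only [DkSMsg]
  rw [Finset.sum_const, nsmul_eq_mul]

lemma score_inl (X' : Finset X) (x : X) (i : Fin 2) :
    finalScore (DkSEdges G) (DkSScores G) (DkSSeeds G X') (DkSMsg G) (Sum.inl x) i =
      (1 - eps (DkSScores G)) * (![1,0] i : ℕ) +
        (if x ∈ X' then 1 else 0) * ((![1,0] i : ℤ) : ℚ) := by
  rw [finalScore, msg_sum, seedFilter_inl]
  split_ifs <;> simp [DkSScores]

lemma score_inr (X' : Finset X) (e : G.edgeSet) (i : Fin 2) :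
    finalScore (DkSEdges G) (DkSScores G) (DkSSeeds G X') (DkSMsg G) (Sum.inr e) i =
      (1 - eps (DkSScores G)) * (![0,2] i : ℕ) +
        ((X'.filter (fun x => x ∈ (e : Sym2 X))).card : ℚ) * ((![1,0] i : ℤ) : ℚ) := by
  rw [finalScore, msg_sum, seedFilter_inr]
  rw [Finset.card_image_of_injective _ Sum.inl_injective]
  simp [DkSScores]

lemma score_empty (v : DkSVoter G) (i : Fin 2) :
    finalScore (DkSEdges G) (DkSScores G) (∅ : Set (DkSVoter G)) (DkSMsg G) v i =
      (1 - eps (DkSScores G)) * (DkSScores G v i : ℚ) := by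
  rw [finalScore]
  simp only [Set.mem_empty_iff_false, false_and, Finset.filter_false, Finset.sum_empty, add_zero]

lemma forall_fin2_ne_zero {P : Fin 2 → Prop} : (∀ j, j ≠ 0 → P j) ↔ P 1 := by
  constructor
  · exact fun h => h 1 (by decide)
  · intro h j hj
    fin_cases j
    · exact absurd rfl hj
    · exact h

lemma forall_fin2_ne_one {P : Fin 2 → Prop} : (∀ j, j ≠ 1 → P j) ↔ P 0 := by
  constructor
  · exact fun h => h 0 (by decide)
  · intro h j hj
    fin_cases j
    · exact h
    · exact absurd rfl hj

lemma t_le_two (X' : Finset X) (e : G.edgeSet) :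
    (X'.filter (fun x => x ∈ (e : Sym2 X))).card ≤ 2 := by
  obtain ⟨⟨a, b⟩, h⟩ := Quot.exists_rep (e : Sym2 X)
  have hsub : X'.filter (fun x => x ∈ (e : Sym2 X)) ⊆ {a, b} := by
    intro x hx
    rw [Finset.mem_filter, ← h, Sym2.mem_iff] at hx
    simpa using hx.2
  calc _ ≤ ({a, b} : Finset X).card := Finset.card_le_card hsub
  _ ≤ 2 := Finset.card_insert_le _ _ |>.trans (by simp)

lemma t_eq_two_iff (X' : Finset X) (e : G.edgeSet) :
    (X'.filter (fun x => x ∈ (e : Sym2 X))).card = 2 ↔ ∀ y ∈ (e : Sym2 X), y ∈ X' := by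
  obtain ⟨⟨a, b⟩, h⟩ := Quot.exists_rep (e : Sym2 X)
  have hne : a ≠ b := by
    have he : (e : Sym2 X) ∈ G.edgeSet := e.2
    rw [← h, SimpleGraph.mem_edgeSet] at he
    exact G.ne_of_adj he
  have hsub : X'.filter (fun x => x ∈ (e : Sym2 X)) ⊆ {a, b} := by
    intro x hx
    rw [Finset.mem_filter, ← h, Sym2.mem_iff] at hx
    simpa using hx.2
  have hcard : ({a, b} : Finset X).card = 2 := by
    rw [Finset.card_insert_of_notMem (by simpa using hne), Finset.card_singleton]
  constructor
  · intro h2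
    have heq : X'.filter (fun x => x ∈ (e : Sym2 X)) = {a, b} :=
      Finset.eq_of_subset_of_card_le hsub (by omega)
    intro y hy
    rw [← h, Sym2.mem_iff] at hy
    rcases hy with rfl | rfl
    · have : y ∈ X'.filter (fun x => x ∈ (e : Sym2 X)) := heq ▸ (by simp)
      exact (Finset.mem_filter.mp this).1
    · have : y ∈ X'.filter (fun x => x ∈ (e : Sym2 X)) := heq ▸ (by simp)
      exact (Finset.mem_filter.mp this).1
  · intro hall
    have heq : X'.filter (fun x => x ∈ (e : Sym2 X)) = {a, b} := by
      refine Finset.Subset.antisymm hsub ?_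
      intro y hy
      simp only [Finset.mem_insert, Finset.mem_singleton] at hy
      have hye : y ∈ (e : Sym2 X) := by
        rw [← h, Sym2.mem_iff]; tauto
      exact Finset.mem_filter.mpr ⟨hall y hye, hye⟩
    rw [heq, hcard]

lemma mem0_inl_seed (X' : Finset X) (x : X) :
    Sum.inl x ∈ finalVoters (DkSEdges G) (DkSScores G) (DkSSeeds G X') (DkSMsg G) 0 := by
  rw [finalVoters, Finset.mem_filter]
  refine ⟨Finset.mem_univ _, forall_fin2_ne_zero.mpr ?_⟩
  rw [score_inl, score_inl]
  have h := one_sub_eps_pos G x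
  have : (0:ℚ) ≤ if x ∈ X' then 1 else 0 := by split_ifs <;> norm_num
  simp only [Matrix.cons_val_one, Matrix.head_cons, Matrix.cons_val_zero]
  push_cast
  nlinarith

lemma notmem1_inl_seed (X' : Finset X) (x : X) :
    Sum.inl x ∉ finalVoters (DkSEdges G) (DkSScores G) (DkSSeeds G X') (DkSMsg G) 1 := by
  rw [finalVoters, Finset.mem_filter]
  rintro ⟨-, h⟩
  have := forall_fin2_ne_one.mp h
  rw [score_inl, score_inl] at this
  have h2 := one_sub_eps_pos G x
  have h3 : (0:ℚ) ≤ if x ∈ X' then 1 else 0 := by split_ifs <;> norm_num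
  simp only [Matrix.cons_val_one, Matrix.head_cons, Matrix.cons_val_zero] at this
  push_cast at this
  nlinarith

lemma mem0_inr_seed (X' : Finset X) (e : G.edgeSet) :
    Sum.inr e ∈ finalVoters (DkSEdges G) (DkSScores G) (DkSSeeds G X') (DkSMsg G) 0
      ↔ ∀ y ∈ (e : Sym2 X), y ∈ X' := by
  rw [finalVoters, Finset.mem_filter, ← t_eq_two_iff]
  have hle := t_le_two G X' e
  set t := (X'.filter (fun x => x ∈ (e : Sym2 X))).card with ht
  rw [and_iff_right (Finset.mem_univ _), forall_fin2_ne_zero, score_inr, score_inr,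
    eps_eq_third G e, ← ht]
  simp only [Matrix.cons_val_one, Matrix.head_cons, Matrix.cons_val_zero]
  push_cast
  constructor
  · intro h
    interval_cases t <;> revert h <;> norm_num
  · intro h; rw [h]; norm_num

lemma mem1_inr_seed (X' : Finset X) (e : G.edgeSet) :
    Sum.inr e ∈ finalVoters (DkSEdges G) (DkSScores G) (DkSSeeds G X') (DkSMsg G) 1
      ↔ ¬ ∀ y ∈ (e : Sym2 X), y ∈ X' := by
  rw [finalVoters, Finset.mem_filter, ← t_eq_two_iff]
  have hle := t_le_two G X' e
  set t := (X'.filter (fun x => x ∈ (e : Sym2 X))).card with ht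
  rw [and_iff_right (Finset.mem_univ _), forall_fin2_ne_one, score_inr, score_inr,
    eps_eq_third G e, ← ht]
  simp only [Matrix.cons_val_one, Matrix.head_cons, Matrix.cons_val_zero]
  push_cast
  constructor
  · intro h
    interval_cases t <;> revert h <;> norm_num
  · intro h
    interval_cases t
    · norm_num
    · norm_num
    · exact absurd rfl h

lemma mem0_inl_empty (x : X) :
    Sum.inl x ∈ finalVoters (DkSEdges G) (DkSScores G) (∅ : Set (DkSVoter G)) (DkSMsg G) 0 := by
  rw [finalVoters, Finset.mem_filter]
  refine ⟨Finset.mem_univ _, forall_fin2_ne_zero.mpr ?_⟩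
  rw [score_empty, score_empty]
  have h := one_sub_eps_pos G x
  simp only [DkSScores, Matrix.cons_val_one, Matrix.head_cons, Matrix.cons_val_zero]
  push_cast
  nlinarith

lemma notmem1_inl_empty (x : X) :
    Sum.inl x ∉ finalVoters (DkSEdges G) (DkSScores G) (∅ : Set (DkSVoter G)) (DkSMsg G) 1 := by
  rw [finalVoters, Finset.mem_filter]
  rintro ⟨-, h⟩
  have := forall_fin2_ne_one.mp h
  rw [score_empty, score_empty] at this
  have h2 := one_sub_eps_pos G x
  simp only [DkSScores, Matrix.cons_val_one, Matrix.head_cons, Matrix.cons_val_zero] at this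
  push_cast at this
  nlinarith

lemma mem1_inr_empty (e : G.edgeSet) :
    Sum.inr e ∈ finalVoters (DkSEdges G) (DkSScores G) (∅ : Set (DkSVoter G)) (DkSMsg G) 1 := by
  rw [finalVoters, Finset.mem_filter]
  refine ⟨Finset.mem_univ _, forall_fin2_ne_one.mpr ?_⟩
  rw [score_empty, score_empty, eps_eq_third G e]
  simp [DkSScores]
  norm_num

lemma notmem0_inr_empty (e : G.edgeSet) :
    Sum.inr e ∉ finalVoters (DkSEdges G) (DkSScores G) (∅ : Set (DkSVoter G)) (DkSMsg G) 0 := by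
  rw [finalVoters, Finset.mem_filter]
  rintro ⟨-, h⟩
  have := forall_fin2_ne_zero.mp h
  rw [score_empty, score_empty, eps_eq_third G e] at this
  simp [DkSScores] at this
  norm_num at this


/-- Seeding `{v_x : x ∈ X'}` with message (+1 on c₀) yields ΔMoV^S = 2·e(X'). -/
theorem deltaMoV_eq_twice_densest (X' : Finset X) :
    MoV (DkSEdges G) (DkSScores G) (DkSSeeds G X') (DkSMsg G) -
      MoV (DkSEdges G) (DkSScores G) (∅ : Set (DkSVoter G)) (DkSMsg G)
    = 2 * (edgesWithin G X' : ℤ) := by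
  classical
  have herase : (Finset.univ.erase (0 : Fin 2)) = {(1 : Fin 2)} := by decide
  rw [MoV, MoV, herase, Finset.sup_singleton, Finset.sup_singleton]
  have key : ∀ S : Finset (DkSVoter G),
      (S.card : ℤ) = ∑ v : DkSVoter G, if v ∈ S then (1:ℤ) else 0 := by
    intro S
    rw [Finset.sum_ite_mem, Finset.univ_inter, Finset.sum_const]
    simp
  rw [key, key, key, key, ← Finset.sum_sub_distrib, ← Finset.sum_sub_distrib,
    ← Finset.sum_sub_distrib]
  have hrhs : 2 * (edgesWithin G X' : ℤ)
      = ∑ e : G.edgeSet, (if ∀ y ∈ (e : Sym2 X), y ∈ X' then (2:ℤ) else 0) := by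
    have h1 : ∑ e : G.edgeSet, (if ∀ y ∈ (e : Sym2 X), y ∈ X' then (2:ℤ) else 0)
        = 2 * ∑ e : G.edgeSet, (if ∀ y ∈ (e : Sym2 X), y ∈ X' then (1:ℤ) else 0) := by
      rw [Finset.mul_sum]
      exact Finset.sum_congr rfl fun e _ => by split_ifs <;> norm_num
    rw [h1, edgesWithin, Finset.sum_boole]
  rw [hrhs, Fintype.sum_sum_type]
  have hx : ∀ x : X,
      ((if Sum.inl x ∈ finalVoters (DkSEdges G) (DkSScores G) (DkSSeeds G X') (DkSMsg G) 0 then (1:ℤ) else 0) -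
        (if Sum.inl x ∈ finalVoters (DkSEdges G) (DkSScores G) (DkSSeeds G X') (DkSMsg G) 1 then (1:ℤ) else 0)) -
      ((if Sum.inl x ∈ finalVoters (DkSEdges G) (DkSScores G) (∅ : Set (DkSVoter G)) (DkSMsg G) 0 then (1:ℤ) else 0) -
        (if Sum.inl x ∈ finalVoters (DkSEdges G) (DkSScores G) (∅ : Set (DkSVoter G)) (DkSMsg G) 1 then (1:ℤ) else 0)) = 0 := by
    intro x
    rw [if_pos (mem0_inl_seed G X' x), if_neg (notmem1_inl_seed G X' x),
      if_pos (mem0_inl_empty G x), if_neg (notmem1_inl_empty G x)]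
    ring
  have he : ∀ e : G.edgeSet,
      ((if Sum.inr e ∈ finalVoters (DkSEdges G) (DkSScores G) (DkSSeeds G X') (DkSMsg G) 0 then (1:ℤ) else 0) -
        (if Sum.inr e ∈ finalVoters (DkSEdges G) (DkSScores G) (DkSSeeds G X') (DkSMsg G) 1 then (1:ℤ) else 0)) -
      ((if Sum.inr e ∈ finalVoters (DkSEdges G) (DkSScores G) (∅ : Set (DkSVoter G)) (DkSMsg G) 0 then (1:ℤ) else 0) -
        (if Sum.inr e ∈ finalVoters (DkSEdges G) (DkSScores G) (∅ : Set (DkSVoter G)) (DkSMsg G) 1 then (1:ℤ) else 0))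
      = (if ∀ y ∈ (e : Sym2 X), y ∈ X' then (2:ℤ) else 0) := by
    intro e
    rw [if_neg (notmem0_inr_empty G e), if_pos (mem1_inr_empty G e)]
    by_cases hp : ∀ y ∈ (e : Sym2 X), y ∈ X'
    · rw [if_pos ((mem0_inr_seed G X' e).mpr hp),
        if_neg (fun h => (mem1_inr_seed G X' e).mp h hp), if_pos hp]
      ring
    · rw [if_neg (fun h => hp ((mem0_inr_seed G X' e).mp h)),
        if_pos ((mem1_inr_seed G X' e).mpr hp), if_neg hp]
      ring
  rw [Finset.sum_congr rfl fun x _ => hx x, Finset.sum_congr rfl fun e _ => he e]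
  simp

end DkS
end

section
/- Let N be a set of n ≥ 1 elements and X = {x_1,…,x_g} a collection of subsets of N with 1 ≤ h < g, and assume that no element of N belongs to every set of X. Construct the directed graph with: a node v_{z,j} for each element z ∈ N and each j ∈ {1,…,n²g²}; for each set x ∈ X, two nodes v_{x,1} and v_{x,2} with an edge from v_{x,1} to v_{x,2}; and an edge from v_{x,2} to v_{z,j} for every z ∈ N∖x and every j ∈ {1,…,n²g²}. The seeds are exactly the nodes v_{x,1} for x ∈ X. Then max{ ΔI^-(E') : E' ⊆ E, |E'| ≤ g−h } = (g−h) + n²g² · max{ |⋂_{x∈J} x| : J ⊆ X, |J| = h }. -/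
open scoped Classical

section MSI

variable (α : Type*) (g n : ℕ)

/-- Nodes: n²g² copies `v_{z,j}` of each element `z`, and a pair `v_{x,1}` (`false`),
`v_{x,2}` (`true`) for each set `x` of the collection. -/
abbrev MSIVoter := (α × Fin (n ^ 2 * g ^ 2)) ⊕ (Fin g × Bool)

variable {α g n}

/-- Edges: `v_{x,1} → v_{x,2}` for each set `x`, and `v_{x,2} → v_{z,j}` for every
element `z ∉ x` and every copy `j`. -/
def MSIEdges (X : Fin g → Finset α) : Set (MSIVoter α g n × MSIVoter α g n) :=
  { p | (∃ x : Fin g, p.1 = Sum.inr (x, false) ∧ p.2 = Sum.inr (x, true)) ∨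
        (∃ (x : Fin g) (z : α) (j : Fin (n ^ 2 * g ^ 2)), z ∉ X x ∧
          p.1 = Sum.inr (x, true) ∧ p.2 = Sum.inl (z, j)) }

/-- Seeds: exactly the nodes `v_{x,1}`. -/
def MSISeeds : Set (MSIVoter α g n) := { v | ∃ x : Fin g, v = Sum.inr (x, false) }


namespace MSIAux

variable {α : Type*} {g n : ℕ}

/-- The first-layer edge `v_{x,1} → v_{x,2}`. -/
def e1 (x : Fin g) : MSIVoter α g n × MSIVoter α g n :=
  (Sum.inr (x, false), Sum.inr (x, true))

/-- The second-layer edge `v_{x,2} → v_{z,j}`. -/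
def e2 (x : Fin g) (p : α × Fin (n ^ 2 * g ^ 2)) : MSIVoter α g n × MSIVoter α g n :=
  (Sum.inr (x, true), Sum.inl p)

lemma e1_injective : Function.Injective (e1 (α := α) (g := g) (n := n)) := by
  intro a b hab
  simpa [e1, Prod.ext_iff] using hab

lemma e1_mem_edges (X : Fin g → Finset α) (x : Fin g) :
    e1 (α := α) (n := n) x ∈ MSIEdges X :=
  Or.inl ⟨x, rfl, rfl⟩

lemma e2_mem_edges_iff (X : Fin g → Finset α) (x : Fin g) (p : α × Fin (n ^ 2 * g ^ 2)) :
    e2 (α := α) x p ∈ MSIEdges X ↔ p.1 ∉ X x := by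
  constructor
  · rintro (⟨y, h1, h2⟩ | ⟨y, z, j, hz, h1, h2⟩)
    · simp [e2] at h2
    · obtain ⟨z', j'⟩ := p
      simp only [e2, Sum.inr.injEq, Prod.mk.injEq, Sum.inl.injEq] at h1 h2
      obtain ⟨rfl, -⟩ := h1
      obtain ⟨rfl, rfl⟩ := h2
      exact hz
  · intro h
    exact Or.inr ⟨x, p.1, p.2, h, rfl, rfl⟩

lemma seed_reaches_iff {X : Fin g → Finset α} {F : Set (MSIVoter α g n × MSIVoter α g n)}
    (hF : F ⊆ MSIEdges X) (x : Fin g) (v : MSIVoter α g n) :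
    Reaches F (Sum.inr (x, false)) v ↔
      v = Sum.inr (x, false) ∨
      (v = Sum.inr (x, true) ∧ e1 x ∈ F) ∨
      (∃ p, v = Sum.inl p ∧ e1 x ∈ F ∧ e2 x p ∈ F) := by
  constructor
  · intro h
    induction h with
    | refl => exact Or.inl rfl
    | tail hab hbc ih =>
      rcases ih with rfl | ⟨rfl, h1⟩ | ⟨p, rfl, h1, h2⟩
      · rcases hF hbc with ⟨y, hb, hc⟩ | ⟨y, z, j, hz, hb, hc⟩
        · obtain rfl : x = y := by simpa using hb
          subst hc
          exact Or.inr (Or.inl ⟨rfl, hbc⟩)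
        · simp at hb
      · rcases hF hbc with ⟨y, hb, hc⟩ | ⟨y, z, j, hz, hb, hc⟩
        · simp at hb
        · obtain rfl : x = y := by simpa using hb
          subst hc
          exact Or.inr (Or.inr ⟨(z, j), rfl, h1, hbc⟩)
      · rcases hF hbc with ⟨y, hb, hc⟩ | ⟨y, z, j, hz, hb, hc⟩ <;> simp at hb
  · rintro (rfl | ⟨rfl, h1⟩ | ⟨p, rfl, h1, h2⟩)
    · exact Relation.ReflTransGen.refl
    · exact Relation.ReflTransGen.single h1
    · exact (Relation.ReflTransGen.single h1).tail h2

lemma influenced_pred_iff {X : Fin g → Finset α} {F : Set (MSIVoter α g n × MSIVoter α g n)}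
    (hF : F ⊆ MSIEdges X) (v : MSIVoter α g n) :
    (∃ s ∈ (MSISeeds : Set (MSIVoter α g n)), Reaches F s v) ↔
      (∃ x : Fin g, v = Sum.inr (x, false)) ∨
      (∃ x : Fin g, v = Sum.inr (x, true) ∧ e1 x ∈ F) ∨
      (∃ (x : Fin g) (p : α × Fin (n ^ 2 * g ^ 2)), v = Sum.inl p ∧ e1 x ∈ F ∧ e2 x p ∈ F) := by
  constructor
  · rintro ⟨s, ⟨x, rfl⟩, hr⟩
    rcases (seed_reaches_iff hF x v).1 hr with rfl | ⟨rfl, h1⟩ | ⟨p, rfl, h1, h2⟩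
    · exact Or.inl ⟨x, rfl⟩
    · exact Or.inr (Or.inl ⟨x, rfl, h1⟩)
    · exact Or.inr (Or.inr ⟨x, p, rfl, h1, h2⟩)
  · rintro (⟨x, rfl⟩ | ⟨x, rfl, h1⟩ | ⟨x, p, rfl, h1, h2⟩)
    · exact ⟨_, ⟨x, rfl⟩, Relation.ReflTransGen.refl⟩
    · exact ⟨_, ⟨x, rfl⟩, (seed_reaches_iff hF x _).2 (Or.inr (Or.inl ⟨rfl, h1⟩))⟩
    · exact ⟨_, ⟨x, rfl⟩, (seed_reaches_iff hF x _).2 (Or.inr (Or.inr ⟨p, rfl, h1, h2⟩))⟩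

variable {X : Fin g → Finset α} {E' : Set (MSIVoter α g n × MSIVoter α g n)}

lemma pred_inl (p : α × Fin (n ^ 2 * g ^ 2)) :
    (∃ s ∈ (MSISeeds : Set (MSIVoter α g n)), Reaches (MSIEdges X \ E') s (Sum.inl p)) ↔
      ∃ x : Fin g, p.1 ∉ X x ∧ e1 (α := α) (n := n) x ∉ E' ∧ e2 x p ∉ E' := by
  rw [influenced_pred_iff Set.diff_subset]
  constructor
  · rintro (⟨x, h⟩ | ⟨x, h, -⟩ | ⟨x, q, hq, h1, h2⟩)
    · simp at h
    · simp at h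
    · obtain rfl : p = q := by simpa using hq
      rw [Set.mem_diff] at h1 h2
      exact ⟨x, (e2_mem_edges_iff X x p).1 h2.1, h1.2, h2.2⟩
  · rintro ⟨x, hz, h1, h2⟩
    exact Or.inr (Or.inr ⟨x, p, rfl, ⟨e1_mem_edges X x, h1⟩,
      ⟨(e2_mem_edges_iff X x p).2 hz, h2⟩⟩)

lemma pred_inr_false (x : Fin g) :
    (∃ s ∈ (MSISeeds : Set (MSIVoter α g n)),
        Reaches (MSIEdges X \ E') s (Sum.inr (x, false))) :=
  ⟨_, ⟨x, rfl⟩, Relation.ReflTransGen.refl⟩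

lemma pred_inr_true (x : Fin g) :
    (∃ s ∈ (MSISeeds : Set (MSIVoter α g n)),
        Reaches (MSIEdges X \ E') s (Sum.inr (x, true))) ↔
      e1 (α := α) (n := n) x ∉ E' := by
  rw [influenced_pred_iff Set.diff_subset]
  constructor
  · rintro (⟨y, h⟩ | ⟨y, h, h1⟩ | ⟨y, q, hq, -, -⟩)
    · simp at h
    · obtain rfl : x = y := by simpa using h
      exact h1.2
    · simp at hq
  · intro h
    exact Or.inr (Or.inl ⟨x, rfl, ⟨e1_mem_edges X x, h⟩⟩)

lemma card_filter_fst {β : Type*} [Fintype β] {m : ℕ} (c : β → Prop) :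
    (Finset.univ.filter fun p : β × Fin m => c p.1).card
      = (Finset.univ.filter c).card * m := by
  classical
  rw [show (Finset.univ.filter fun p : β × Fin m => c p.1)
      = (Finset.univ.filter c) ×ˢ Finset.univ by
    ext p; simp [Finset.mem_product]]
  rw [Finset.card_product, Finset.card_univ, Fintype.card_fin]

lemma chi_formula [Fintype α] :
    chi (MSIEdges X \ E') (MSISeeds : Set (MSIVoter α g n)) =
      (Finset.univ.filter fun p : α × Fin (n ^ 2 * g ^ 2) =>
          ∃ x : Fin g, p.1 ∉ X x ∧ e1 (α := α) (n := n) x ∉ E' ∧ e2 x p ∉ E').card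
        + g
        + (Finset.univ.filter fun x : Fin g => e1 (α := α) (n := n) x ∉ E').card := by
  classical
  unfold chi influenced
  rw [Finset.card_filter, Fintype.sum_sum_type]
  simp only [pred_inl (X := X) (E' := E')]
  rw [← Finset.card_filter]
  rw [Fintype.sum_prod_type]
  simp only [Fintype.sum_bool]
  simp only [pred_inr_true (X := X) (E' := E'),
    if_pos (pred_inr_false (X := X) (E' := E') _)]
  rw [Finset.sum_add_distrib, Finset.sum_const, smul_eq_mul, mul_one,
    ← Finset.card_filter, Finset.card_univ, Fintype.card_fin]
  omega

/-- Instance-free counting of a predicate over a fintype. -/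
noncomputable def cnt {β : Type*} [Fintype β] (p : β → Prop) : ℕ := Nat.card {b // p b}

lemma cnt_eq {β : Type*} [Fintype β] (p : β → Prop) [DecidablePred p] :
    cnt p = (Finset.univ.filter p).card := by
  rw [cnt, Nat.card_eq_fintype_card, Fintype.card_subtype]

lemma cnt_congr {β : Type*} [Fintype β] {p q : β → Prop} (h : ∀ b, p b ↔ q b) :
    cnt p = cnt q := Nat.card_congr (Equiv.subtypeEquivRight h)

lemma cnt_univ {β : Type*} [Fintype β] {p : β → Prop} (h : ∀ b, p b) :
    cnt p = Fintype.card β := by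
  rw [cnt, Nat.card_congr (Equiv.subtypeUnivEquiv h), Nat.card_eq_fintype_card]

lemma cnt_add_cnt_not {β : Type*} [Fintype β] (p : β → Prop) :
    cnt p + cnt (fun b => ¬ p b) = Fintype.card β := by
  classical
  rw [cnt, cnt, ← Nat.card_sum, Nat.card_congr (Equiv.sumCompl p), Nat.card_eq_fintype_card]

lemma cnt_mono {β : Type*} [Fintype β] {p q : β → Prop} (h : ∀ b, p b → q b) :
    cnt p ≤ cnt q := by
  rw [cnt, cnt]
  exact Nat.card_le_card_of_injective (fun b => ⟨b.1, h b.1 b.2⟩)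
    (by intro a b hab; cases a; cases b; simpa using hab)

lemma cnt_fst {β : Type*} [Fintype β] (m : ℕ) (c : β → Prop) :
    cnt (fun q : β × Fin m => c q.1) = cnt c * m := by
  classical
  rw [cnt_eq, cnt_eq, card_filter_fst]

lemma cnt_finset {β : Type*} [Fintype β] [DecidableEq β] (J : Finset β) :
    cnt (fun x => x ∈ J) = J.card := by
  classical
  rw [cnt_eq]
  simp [Finset.filter_univ_mem]

lemma chi_formula_cnt {α : Type*} {g n : ℕ} [Fintype α] {X : Fin g → Finset α}
    {E' : Set (MSIVoter α g n × MSIVoter α g n)} :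
    chi (MSIEdges X \ E') (MSISeeds : Set (MSIVoter α g n)) =
      cnt (fun p : α × Fin (n ^ 2 * g ^ 2) =>
          ∃ x : Fin g, p.1 ∉ X x ∧ e1 (α := α) (n := n) x ∉ E' ∧ e2 x p ∉ E')
        + g
        + cnt (fun x : Fin g => e1 (α := α) (n := n) x ∉ E') := by
  rw [chi_formula, cnt_eq, cnt_eq]

end MSIAux

/-- The maximum of ΔI⁻(E') over edge sets E' ⊆ E with |E'| ≤ g−h equals
(g−h) + n²g²·max{ |⋂_{x∈J} x| : J ⊆ X, |J| = h }. -/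
theorem max_influence_decrease_eq_msi {α : Type*} [Fintype α] [DecidableEq α]
    (n g h : ℕ) (hcard : Fintype.card α = n) (hn : 1 ≤ n) (hh : 1 ≤ h) (hhg : h < g)
    (X : Fin g → Finset α) (hnc : ∀ z : α, ∃ x : Fin g, z ∉ X x) :
    IsGreatest
      { d : ℤ | ∃ E' : Set (MSIVoter α g n × MSIVoter α g n),
          E' ⊆ MSIEdges X ∧ E'.ncard ≤ g - h ∧
          d = (chi (MSIEdges X) (MSISeeds : Set (MSIVoter α g n)) : ℤ) -
                (chi (MSIEdges X \ E') (MSISeeds : Set (MSIVoter α g n)) : ℤ) }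
      (((g - h : ℕ) : ℤ) + ((n ^ 2 * g ^ 2 : ℕ) : ℤ) *
        (((Finset.powersetCard h (Finset.univ : Finset (Fin g))).sup
            fun J => (Finset.univ.filter fun z : α => ∀ x ∈ J, z ∈ X x).card : ℕ) : ℤ)) := by
  classical
  have hgpos : 0 < g := by omega
  have hfull : chi (MSIEdges X) (MSISeeds : Set (MSIVoter α g n)) =
      n * (n ^ 2 * g ^ 2) + g + g := by
    rw [show MSIEdges X = MSIEdges X \ (∅ : Set (MSIVoter α g n × MSIVoter α g n)) from
      (Set.diff_empty).symm, MSIAux.chi_formula_cnt]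
    have hall1 : ∀ p : α × Fin (n ^ 2 * g ^ 2),
        ∃ x : Fin g, p.1 ∉ X x ∧
          MSIAux.e1 (α := α) (n := n) x ∉ (∅ : Set (MSIVoter α g n × MSIVoter α g n)) ∧
          MSIAux.e2 x p ∉ (∅ : Set (MSIVoter α g n × MSIVoter α g n)) := by
      intro p
      obtain ⟨x, hx⟩ := hnc p.1
      exact ⟨x, hx, Set.notMem_empty _, Set.notMem_empty _⟩
    have hall2 : ∀ x : Fin g,
        MSIAux.e1 (α := α) (n := n) x ∉ (∅ : Set (MSIVoter α g n × MSIVoter α g n)) :=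
      fun x => Set.notMem_empty _
    rw [MSIAux.cnt_univ hall1, MSIAux.cnt_univ hall2, Fintype.card_prod, Fintype.card_fin,
      Fintype.card_fin, hcard]
  constructor
  · -- membership: remove the first-layer edges of all sets outside an optimal J
    have hne : (Finset.powersetCard h (Finset.univ : Finset (Fin g))).Nonempty := by
      rw [Finset.powersetCard_nonempty, Finset.card_univ, Fintype.card_fin]; omega
    obtain ⟨J, hJmem, hJsup⟩ := Finset.exists_mem_eq_sup _ hne
      (fun J => (Finset.univ.filter fun z : α => ∀ x ∈ J, z ∈ X x).card)
    obtain ⟨-, hJcard⟩ := Finset.mem_powersetCard.1 hJmem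
    set E₀ : Set (MSIVoter α g n × MSIVoter α g n) :=
      ↑((Finset.univ \ J).image (MSIAux.e1 (α := α) (g := g) (n := n))) with hE₀
    have hmem1 : ∀ x : Fin g, MSIAux.e1 (α := α) (n := n) x ∉ E₀ ↔ x ∈ J := by
      intro x
      rw [hE₀]
      simp only [Finset.mem_coe, Finset.mem_image, Finset.mem_sdiff, Finset.mem_univ,
        true_and, not_exists, not_and]
      constructor
      · intro hx
        by_contra hxJ
        exact hx x hxJ rfl
      · intro hxJ y hy he
        exact hy (by rw [MSIAux.e1_injective he]; exact hxJ)
    have hmem2 : ∀ (x : Fin g) (p : α × Fin (n ^ 2 * g ^ 2)),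
        MSIAux.e2 (α := α) x p ∉ E₀ := by
      intro x p hp
      rw [hE₀] at hp
      obtain ⟨y, -, he⟩ := Finset.mem_image.1 (Finset.mem_coe.1 hp)
      simp [MSIAux.e1, MSIAux.e2, Prod.ext_iff] at he
    refine ⟨E₀, ?_, ?_, ?_⟩
    · intro p hp
      rw [hE₀] at hp
      obtain ⟨x, -, rfl⟩ := Finset.mem_image.1 (Finset.mem_coe.1 hp)
      exact MSIAux.e1_mem_edges X x
    · rw [hE₀, Set.ncard_coe_finset, Finset.card_image_of_injective _ MSIAux.e1_injective,
        Finset.card_sdiff_of_subset (Finset.subset_univ J), Finset.card_univ, Fintype.card_fin, hJcard]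
    · rw [hfull, MSIAux.chi_formula_cnt]
      have hcnt1 : MSIAux.cnt (fun p : α × Fin (n ^ 2 * g ^ 2) =>
            ∃ x : Fin g, p.1 ∉ X x ∧ MSIAux.e1 (α := α) (n := n) x ∉ E₀ ∧
              MSIAux.e2 x p ∉ E₀)
          = MSIAux.cnt (fun z : α => ∃ x ∈ J, z ∉ X x) * (n ^ 2 * g ^ 2) := by
        rw [← MSIAux.cnt_fst (n ^ 2 * g ^ 2) (fun z : α => ∃ x ∈ J, z ∉ X x)]
        refine MSIAux.cnt_congr fun p => ?_
        constructor
        · rintro ⟨x, hz, h1, -⟩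
          exact ⟨x, (hmem1 x).1 h1, hz⟩
        · rintro ⟨x, hxJ, hz⟩
          exact ⟨x, hz, (hmem1 x).2 hxJ, hmem2 x p⟩
      have hcnt2 : MSIAux.cnt (fun x : Fin g => MSIAux.e1 (α := α) (n := n) x ∉ E₀) = h := by
        rw [MSIAux.cnt_congr hmem1, MSIAux.cnt_finset, hJcard]
      have hcompl : MSIAux.cnt (fun z : α => ∃ x ∈ J, z ∉ X x)
          + MSIAux.cnt (fun z : α => ∀ x ∈ J, z ∈ X x) = n := by
        have h1 := MSIAux.cnt_add_cnt_not (fun z : α => ∃ x ∈ J, z ∉ X x)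
        have h2 : MSIAux.cnt (fun z : α => ¬ ∃ x ∈ J, z ∉ X x)
            = MSIAux.cnt (fun z : α => ∀ x ∈ J, z ∈ X x) := by
          refine MSIAux.cnt_congr fun z => ?_
          push_neg
          rfl
        rw [h2, hcard] at h1
        exact h1
      have hsupcnt : (Finset.univ.filter fun z : α => ∀ x ∈ J, z ∈ X x).card
          = MSIAux.cnt (fun z : α => ∀ x ∈ J, z ∈ X x) :=
        (MSIAux.cnt_eq _).symm
      rw [hcnt1, hcnt2, hJsup, hsupcnt]
      have hcomplZ : (MSIAux.cnt (fun z : α => ∃ x ∈ J, z ∉ X x) : ℤ)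
          + (MSIAux.cnt (fun z : α => ∀ x ∈ J, z ∈ X x) : ℤ) = (n : ℤ) := by
        exact_mod_cast hcompl
      have hgh : ((g - h : ℕ) : ℤ) = (g : ℤ) - (h : ℤ) := by omega
      rw [hgh]
      push_cast
      linear_combination ((n : ℤ) ^ 2 * (g : ℤ) ^ 2) * hcomplZ
  · -- upper bound
    rintro d ⟨E', hsub, hEcard, rfl⟩
    rw [hfull, MSIAux.chi_formula_cnt]
    set K := Finset.univ.filter (fun x : Fin g =>
      ¬ MSIAux.e1 (α := α) (n := n) x ∉ E') with hK
    set D := Finset.univ.filter (fun p : α × Fin (n ^ 2 * g ^ 2) =>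
      ¬ ∃ x : Fin g, p.1 ∉ X x ∧ MSIAux.e1 (α := α) (n := n) x ∉ E' ∧
        MSIAux.e2 x p ∉ E') with hD
    set D1 := Finset.univ.filter (fun p : α × Fin (n ^ 2 * g ^ 2) =>
      ∀ x : Fin g, x ∉ K → p.1 ∈ X x) with hD1
    set IK := Finset.univ.filter (fun z : α => ∀ x : Fin g, x ∉ K → z ∈ X x) with hIK
    have hPD : MSIAux.cnt (fun p : α × Fin (n ^ 2 * g ^ 2) =>
          ∃ x : Fin g, p.1 ∉ X x ∧ MSIAux.e1 (α := α) (n := n) x ∉ E' ∧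
            MSIAux.e2 x p ∉ E') + D.card = n * (n ^ 2 * g ^ 2) := by
      have h1 := MSIAux.cnt_add_cnt_not (fun p : α × Fin (n ^ 2 * g ^ 2) =>
        ∃ x : Fin g, p.1 ∉ X x ∧ MSIAux.e1 (α := α) (n := n) x ∉ E' ∧
          MSIAux.e2 x p ∉ E')
      rw [MSIAux.cnt_eq (fun p : α × Fin (n ^ 2 * g ^ 2) =>
        ¬ ∃ x : Fin g, p.1 ∉ X x ∧ MSIAux.e1 (α := α) (n := n) x ∉ E' ∧
          MSIAux.e2 x p ∉ E'), ← hD, Fintype.card_prod, Fintype.card_fin, hcard] at h1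
      exact h1
    have hQK : MSIAux.cnt (fun x : Fin g => MSIAux.e1 (α := α) (n := n) x ∉ E') + K.card = g := by
      have h1 := MSIAux.cnt_add_cnt_not (fun x : Fin g => MSIAux.e1 (α := α) (n := n) x ∉ E')
      rw [MSIAux.cnt_eq (fun x : Fin g => ¬ MSIAux.e1 (α := α) (n := n) x ∉ E'), ← hK,
        Fintype.card_fin] at h1
      exact h1
    have hfin : E'.Finite := Set.toFinite E'
    have himg : K.image (MSIAux.e1 (α := α) (g := g) (n := n)) ⊆ hfin.toFinset := by
      intro e he
      obtain ⟨x, hx, rfl⟩ := Finset.mem_image.1 he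
      rw [hK, Finset.mem_filter] at hx
      exact hfin.mem_toFinset.2 (not_not.1 hx.2)
    have hKcard : K.card ≤ g - h := by
      have h1 : K.card ≤ hfin.toFinset.card := by
        rw [← Finset.card_image_of_injective K (MSIAux.e1_injective (α := α) (g := g) (n := n))]
        exact Finset.card_le_card himg
      rw [← Set.ncard_eq_toFinset_card E' hfin] at h1
      omega
    have hD2 : K.card + (D \ D1).card ≤ g - h := by
      set f2 : α × Fin (n ^ 2 * g ^ 2) → MSIVoter α g n × MSIVoter α g n :=
        fun p => if hx : ∃ x : Fin g, MSIAux.e2 (α := α) x p ∈ E'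
          then MSIAux.e2 hx.choose p else MSIAux.e1 ⟨0, hgpos⟩ with hf2
      have hf2spec : ∀ p ∈ D \ D1, f2 p ∈ E' ∧ (f2 p).2 = Sum.inl p := by
        intro p hp
        rw [Finset.mem_sdiff, hD, hD1, Finset.mem_filter, Finset.mem_filter] at hp
        simp only [Finset.mem_univ, true_and] at hp
        obtain ⟨hpD, hpD1⟩ := hp
        push_neg at hpD hpD1
        obtain ⟨x, hxK, hxz⟩ := hpD1
        rw [hK, Finset.mem_filter] at hxK
        simp only [Finset.mem_univ, true_and, not_not] at hxK
        have hex : ∃ y : Fin g, MSIAux.e2 (α := α) y p ∈ E' := ⟨x, hpD x hxz hxK⟩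
        rw [hf2]
        simp only [dif_pos hex]
        exact ⟨hex.choose_spec, rfl⟩
      have hinj : Set.InjOn f2 ↑(D \ D1) := by
        intro p hp q hq he
        have h1 := (hf2spec p (Finset.mem_coe.1 hp)).2
        have h2 := (hf2spec q (Finset.mem_coe.1 hq)).2
        rw [he, h2] at h1
        exact (Sum.inl.inj h1).symm
      have hmaps : ∀ p ∈ D \ D1, f2 p ∈
          hfin.toFinset \ K.image (MSIAux.e1 (α := α) (g := g) (n := n)) := by
        intro p hp
        obtain ⟨hmem, hsnd⟩ := hf2spec p hp
        rw [Finset.mem_sdiff]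
        refine ⟨hfin.mem_toFinset.2 hmem, ?_⟩
        intro hcon
        obtain ⟨y, -, hye⟩ := Finset.mem_image.1 hcon
        rw [← hye] at hsnd
        simp [MSIAux.e1] at hsnd
      have hcard2 : (D \ D1).card ≤
          (hfin.toFinset \ K.image (MSIAux.e1 (α := α) (g := g) (n := n))).card :=
        Finset.card_le_card_of_injOn f2 hmaps hinj
      have h3 := Finset.card_sdiff_of_subset himg
      have h4 : (K.image (MSIAux.e1 (α := α) (g := g) (n := n))).card = K.card :=
        Finset.card_image_of_injective K MSIAux.e1_injective
      have h5 : hfin.toFinset.card = E'.ncard := (Set.ncard_eq_toFinset_card E' hfin).symm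
      have h6 : (K.image (MSIAux.e1 (α := α) (g := g) (n := n))).card ≤
          hfin.toFinset.card := Finset.card_le_card himg
      omega
    have hD1card : D1.card = IK.card * (n ^ 2 * g ^ 2) := by
      rw [hD1, hIK, ← MSIAux.cnt_eq, ← MSIAux.cnt_eq]
      exact MSIAux.cnt_fst (n ^ 2 * g ^ 2) (fun z : α => ∀ x : Fin g, x ∉ K → z ∈ X x)
    have hDsplit : D.card ≤ D1.card + (D \ D1).card := by
      have hsub' : D ⊆ D1 ∪ (D \ D1) := by
        intro a ha
        by_cases hcase : a ∈ D1
        · exact Finset.mem_union_left _ hcase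
        · exact Finset.mem_union_right _ (Finset.mem_sdiff.2 ⟨ha, hcase⟩)
      exact (Finset.card_le_card hsub').trans (Finset.card_union_le _ _)
    have hIKle : IK.card ≤ (Finset.powersetCard h (Finset.univ : Finset (Fin g))).sup
        (fun J => (Finset.univ.filter fun z : α => ∀ x ∈ J, z ∈ X x).card) := by
      have hKc : h ≤ (Finset.univ \ K).card := by
        rw [Finset.card_sdiff_of_subset (Finset.subset_univ K), Finset.card_univ, Fintype.card_fin]
        omega
      obtain ⟨J, hJsub, hJcard⟩ := Finset.exists_subset_card_eq hKc
      have hsubfil : IK ⊆ Finset.univ.filter fun z : α => ∀ x ∈ J, z ∈ X x := by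
        intro z hz
        rw [hIK, Finset.mem_filter] at hz
        rw [Finset.mem_filter]
        refine ⟨Finset.mem_univ _, fun x hxJ => hz.2 x ?_⟩
        have hx := hJsub hxJ
        rw [Finset.mem_sdiff] at hx
        exact hx.2
      exact (Finset.card_le_card hsubfil).trans
        (Finset.le_sup (f := fun J => (Finset.univ.filter
            fun z : α => ∀ x ∈ J, z ∈ X x).card)
          (Finset.mem_powersetCard.2 ⟨Finset.subset_univ J, hJcard⟩))
    have hdk : D.card + K.card ≤ (g - h) + (n ^ 2 * g ^ 2) *
        ((Finset.powersetCard h (Finset.univ : Finset (Fin g))).sup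
          (fun J => (Finset.univ.filter fun z : α => ∀ x ∈ J, z ∈ X x).card)) := by
      have hm : IK.card * (n ^ 2 * g ^ 2) ≤ (n ^ 2 * g ^ 2) *
          ((Finset.powersetCard h (Finset.univ : Finset (Fin g))).sup
            (fun J => (Finset.univ.filter fun z : α => ∀ x ∈ J, z ∈ X x).card)) := by
        rw [mul_comm (n ^ 2 * g ^ 2)]
        exact Nat.mul_le_mul hIKle le_rfl
      calc D.card + K.card ≤ (D1.card + (D \ D1).card) + K.card := by omega
        _ = IK.card * (n ^ 2 * g ^ 2) + ((D \ D1).card + K.card) := by rw [hD1card]; ring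
        _ ≤ (n ^ 2 * g ^ 2) *
            ((Finset.powersetCard h (Finset.univ : Finset (Fin g))).sup
              (fun J => (Finset.univ.filter fun z : α => ∀ x ∈ J, z ∈ X x).card))
            + (g - h) := add_le_add hm (by omega)
        _ = _ := add_comm _ _
    have c1 := congrArg (Nat.cast : ℕ → ℤ) hPD
    have c2 := congrArg (Nat.cast : ℕ → ℤ) hQK
    calc ((n * (n ^ 2 * g ^ 2) + g + g : ℕ) : ℤ)
          - ((MSIAux.cnt (fun p : α × Fin (n ^ 2 * g ^ 2) =>
              ∃ x : Fin g, p.1 ∉ X x ∧ MSIAux.e1 (α := α) (n := n) x ∉ E' ∧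
                MSIAux.e2 x p ∉ E') + g
            + MSIAux.cnt (fun x : Fin g => MSIAux.e1 (α := α) (n := n) x ∉ E') : ℕ) : ℤ)
        = (D.card : ℤ) + (K.card : ℤ) := by push_cast at c1 c2 ⊢; linarith
      _ ≤ (((g - h) + (n ^ 2 * g ^ 2) *
            ((Finset.powersetCard h (Finset.univ : Finset (Fin g))).sup
              (fun J => (Finset.univ.filter fun z : α => ∀ x ∈ J, z ∈ X x).card)) : ℕ) : ℤ) :=
          Nat.cast_le.2 hdk
      _ = _ := by push_cast [Nat.cast_sub hhg.le]; ring

end MSI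
end

section
/- Let N be a set of n ≥ 1 elements and X = {x_1,…,x_g} a collection of subsets of N with 1 ≤ h < g. Construct the directed graph with: a node v_{z,j} for each element z ∈ N and each j ∈ {1,…,n²g²}; for each set x ∈ X, two nodes v_{x,1} and v_{x,2} with an edge from v_{x,1} to v_{x,2}; and an edge from v_{x,2} to v_{z,j} for every z ∈ N∖x and every j ∈ {1,…,n²g²}. Consider the deterministic election instance on this graph with two candidates c_0, c_1, where every voter has score vector ⟨1,0⟩, the seeds are exactly the nodes v_{x,1}, and every seed sends the message m with m(0) = −1 and m(1) = 0. Then for every E' ⊆ E, ΔMoV^-(E') = 2·ΔI^-(E'). -/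
open scoped Classical

section Helpers
variable {V : Type*} [Fintype V] [Nonempty V]

lemma eps_half : eps (fun _ : V => ![1,0]) = 1/2 := by
  have h2 : (Finset.univ.sup fun i => (![1,0] : Fin 2 → ℕ) i) = 1 := by decide
  have h1 : (Finset.univ.sup fun v : V => Finset.univ.sup fun i => (![1,0] : Fin 2 → ℕ) i) = 1 := by
    simp only [h2, Finset.sup_const Finset.univ_nonempty]
  rw [eps, h1]; norm_num

lemma final0 (Es : Set (V × V)) (S : Set V) (v : V) :
    finalScore Es (fun _ => ![1,0]) S (fun _ => ![-1,0]) v 0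
      = 1/2 - ((Finset.univ.filter (fun s => s ∈ S ∧ Reaches Es s v)).card : ℚ) := by
  rw [finalScore, eps_half]
  simp [Finset.sum_const]
  ring

lemma final1 (Es : Set (V × V)) (S : Set V) (v : V) :
    finalScore Es (fun _ => ![1,0]) S (fun _ => ![-1,0]) v 1 = 0 := by
  rw [finalScore, eps_half]
  simp

lemma fv0 (Es : Set (V × V)) (S : Set V) :
    finalVoters Es (fun _ => ![1,0]) S (fun _ => ![-1,0]) 0
      = Finset.univ.filter (fun v => ¬ ∃ s ∈ S, Reaches Es s v) := by
  ext v
  simp only [finalVoters, Finset.mem_filter, Finset.mem_univ, true_and]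
  constructor
  · intro hv
    have h := hv 1 (by decide)
    rw [final0, final1] at h
    rintro ⟨s, hs, hr⟩
    have hcard : 1 ≤ (Finset.univ.filter (fun s => s ∈ S ∧ Reaches Es s v)).card :=
      Finset.card_pos.mpr ⟨s, by simp [hs, hr]⟩
    have : (1 : ℚ) ≤ ((Finset.univ.filter (fun s => s ∈ S ∧ Reaches Es s v)).card : ℚ) := by
      exact_mod_cast hcard
    linarith
  · intro hv j hj
    have hj1 : j = 1 := by fin_cases j <;> simp_all
    have hcard : (Finset.univ.filter (fun s => s ∈ S ∧ Reaches Es s v)).card = 0 := by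
      rw [Finset.card_eq_zero, Finset.filter_eq_empty_iff]
      intro s _ ⟨hs, hr⟩
      exact hv ⟨s, hs, hr⟩
    rw [hj1, final0, final1, hcard]
    norm_num

lemma fv1 (Es : Set (V × V)) (S : Set V) :
    finalVoters Es (fun _ => ![1,0]) S (fun _ => ![-1,0]) 1 = influenced Es S := by
  ext v
  simp only [finalVoters, influenced, Finset.mem_filter, Finset.mem_univ, true_and]
  constructor
  · intro hv
    have h := hv 0 (by decide)
    rw [final0, final1] at h
    by_contra hni
    have hcard : (Finset.univ.filter (fun s => s ∈ S ∧ Reaches Es s v)).card = 0 := by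
      rw [Finset.card_eq_zero, Finset.filter_eq_empty_iff]
      intro s _ ⟨hs, hr⟩
      exact hni ⟨s, hs, hr⟩
    rw [hcard] at h
    norm_num at h
  · rintro ⟨s, hs, hr⟩ j hj
    have hj0 : j = 0 := by fin_cases j <;> simp_all
    have hcard : 1 ≤ (Finset.univ.filter (fun s => s ∈ S ∧ Reaches Es s v)).card :=
      Finset.card_pos.mpr ⟨s, by simp [hs, hr]⟩
    have hc : (1 : ℚ) ≤ ((Finset.univ.filter (fun s => s ∈ S ∧ Reaches Es s v)).card : ℚ) := by
      exact_mod_cast hcard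
    rw [hj0, final0, final1]
    linarith

lemma MoV_eq (Es : Set (V × V)) (S : Set V) :
    MoV Es (fun _ : V => ![1,0]) S (fun _ : V => ![-1,0])
      = (Fintype.card V : ℤ) - 2 * (chi Es S : ℤ) := by
  have he : (Finset.univ.erase (0 : Fin 2)) = {1} := by decide
  rw [MoV, he, Finset.sup_singleton, fv0, fv1]
  have h1 : (Finset.univ.filter (fun v : V => ¬ ∃ s ∈ S, Reaches Es s v)).card
      = Fintype.card V - (influenced Es S).card := by
    rw [Finset.filter_not, Finset.card_sdiff_of_subset (Finset.filter_subset _ _), Finset.card_univ]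
    rfl
  rw [h1, chi]
  have : (influenced Es S).card ≤ Fintype.card V := Finset.card_le_univ _
  omega
end Helpers

section MSI

variable (α : Type*) (g n : ℕ)

variable {α g n}

/-- Every voter has score vector ⟨1,0⟩. -/
def MSIScores : MSIVoter α g n → Fin 2 → ℕ := fun _ => ![1, 0]

/-- Every seed sends the message (−1 on c₀, nothing on c₁). -/
def MSIMsg : MSIVoter α g n → Fin 2 → ℤ := fun _ => ![-1, 0]

/-- In the two-candidate election on the MSI graph, where every voter has scores ⟨1,0⟩ and
every seed sends −1 on c₀, removing any edge set E' ⊆ E gives ΔMoV⁻(E') = 2·ΔI⁻(E'). -/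
theorem deltaMoV_eq_twice_deltaI {α : Type*} [Fintype α] [DecidableEq α]
    (n g h : ℕ) (hcard : Fintype.card α = n) (hn : 1 ≤ n) (hh : 1 ≤ h) (hhg : h < g)
    (X : Fin g → Finset α) :
    ∀ E' : Set (MSIVoter α g n × MSIVoter α g n), E' ⊆ MSIEdges X →
      MoV (MSIEdges X \ E') MSIScores (MSISeeds : Set (MSIVoter α g n)) MSIMsg -
        MoV (MSIEdges X) MSIScores (MSISeeds : Set (MSIVoter α g n)) MSIMsg
      = 2 * ((chi (MSIEdges X) (MSISeeds : Set (MSIVoter α g n)) : ℤ) -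
              (chi (MSIEdges X \ E') (MSISeeds : Set (MSIVoter α g n)) : ℤ)) := by
  intro E' _
  have hg : 0 < g := lt_of_le_of_lt (Nat.zero_le h) hhg
  have : Nonempty (MSIVoter α g n) := ⟨Sum.inr (⟨0, hg⟩, false)⟩
  rw [show (MSIScores : MSIVoter α g n → Fin 2 → ℕ) = fun _ => ![1,0] from rfl,
      show (MSIMsg : MSIVoter α g n → Fin 2 → ℤ) = fun _ => ![-1,0] from rfl,
      MoV_eq, MoV_eq]
  ring

end MSI
end

section
/- In the deterministic election model with exactly two candidates c_0, c_1, suppose every seed's message m_s satisfies m_s(0) ≤ 0 and m_s(1) ≥ 0 (i.e., every message is weakly unfavorable to c_0). Then MoV is antitone in the removed edge set: for all E_1 ⊆ E_2 ⊆ E, MoV(S,M,E∖E_2) ≥ MoV(S,M,E∖E_1). In particular ΔMoV^-(E') ≤ ΔMoV^-(E) for every E' ⊆ E, i.e., with unlimited budget removing all edges maximizes ΔMoV^-. -/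
open scoped Classical

section Aux

variable {V : Type*} [Fintype V]

lemma reaches_mono {A B : Set (V × V)} (h : A ⊆ B) {s v : V} (hr : Reaches A s v) :
    Reaches B s v :=
  Relation.ReflTransGen.mono (fun a b hab => h hab) s v hr

lemma eps_pos (π : V → Fin 2 → ℕ) : 0 < eps π := by
  unfold eps; positivity

lemma pi_le (π : V → Fin 2 → ℕ) (v : V) (i : Fin 2) :
    π v i ≤ Finset.univ.sup fun v => Finset.univ.sup fun i => π v i :=
  le_trans (Finset.le_sup (f := π v) (Finset.mem_univ i))
    (Finset.le_sup (f := fun v => Finset.univ.sup fun i => π v i) (Finset.mem_univ v))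

lemma no_tie (π : V → Fin 2 → ℕ) (hinj : ∀ v : V, π v 0 ≠ π v 1)
    (S : Set V) (m : V → Fin 2 → ℤ) (A : Set (V × V)) (v : V) :
    finalScore A π S m v 0 ≠ finalScore A π S m v 1 := by
  intro heq
  set M : ℕ := Finset.univ.sup fun v => Finset.univ.sup fun i => π v i with hM
  have hε : eps π = 1 / (1 + (M : ℚ)) := rfl
  have hMpos : (0:ℚ) < 1 + (M : ℚ) := by positivity
  set f := Finset.univ.filter (fun s => s ∈ S ∧ Reaches A s v) with hf
  set a : ℚ := (π v 0 : ℚ) with ha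
  set b : ℚ := (π v 1 : ℚ) with hb
  set s0 : ℤ := ∑ s ∈ f, m s 0 with hs0
  set s1 : ℤ := ∑ s ∈ f, m s 1 with hs1
  have heq' : (1 - eps π) * a + (s0 : ℚ) = (1 - eps π) * b + (s1 : ℚ) := by
    have e0 : ((s0 : ℤ) : ℚ) = ∑ s ∈ f, ((m s 0 : ℤ) : ℚ) := by rw [hs0]; push_cast; ring
    have e1 : ((s1 : ℤ) : ℚ) = ∑ s ∈ f, ((m s 1 : ℤ) : ℚ) := by rw [hs1]; push_cast; ring
    rw [e0, e1]; exact heq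
  set z : ℤ := (π v 0 : ℤ) - (π v 1 : ℤ) + s0 - s1 with hz
  have key : eps π * (a - b) = (z : ℚ) := by
    rw [hz]; push_cast; rw [← ha, ← hb]; linear_combination -heq'
  have habs : |eps π * (a - b)| < 1 := by
    have haM : a ≤ (M : ℚ) := by
      have := pi_le π v 0
      rw [ha, hM]; exact_mod_cast this
    have hbM : b ≤ (M : ℚ) := by
      have := pi_le π v 1
      rw [hb, hM]; exact_mod_cast this
    have ha0 : (0:ℚ) ≤ a := by rw [ha]; positivity
    have hb0 : (0:ℚ) ≤ b := by rw [hb]; positivity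
    have habd : |a - b| ≤ (M : ℚ) := abs_le.mpr ⟨by linarith, by linarith⟩
    have h1 : |eps π * (a - b)| = eps π * |a - b| := by
      rw [abs_mul, abs_of_pos (eps_pos π)]
    rw [h1, hε]
    calc 1 / (1 + (M:ℚ)) * |a - b| ≤ 1 / (1 + (M:ℚ)) * (M : ℚ) := by
          apply mul_le_mul_of_nonneg_left habd; positivity
      _ = (M : ℚ) / (1 + (M:ℚ)) := by ring
      _ < 1 := (div_lt_one hMpos).mpr (by linarith)
  rw [key] at habs
  have hz0 : z = 0 := by
    have : |z| < 1 := by exact_mod_cast habs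
    have := abs_lt.mp this
    omega
  rw [hz0] at key
  have key0 : eps π * (a - b) = 0 := by rw [key]; norm_num
  have hε0 : eps π ≠ 0 := ne_of_gt (eps_pos π)
  have hab0 : a - b = 0 := by
    rcases mul_eq_zero.mp key0 with h | h
    · exact absurd h hε0
    · exact h
  have hab : a = b := by linarith
  rw [ha, hb] at hab
  exact hinj v (by exact_mod_cast hab)

lemma mem_fv0 (π : V → Fin 2 → ℕ) (S : Set V) (m : V → Fin 2 → ℤ) (A : Set (V × V)) (v : V) :
    v ∈ finalVoters A π S m 0 ↔ finalScore A π S m v 1 < finalScore A π S m v 0 := by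
  unfold finalVoters
  simp only [Finset.mem_filter, Finset.mem_univ, true_and]
  constructor
  · intro h; exact h 1 (by decide)
  · intro h j hj
    fin_cases j
    · exact absurd rfl hj
    · exact h

lemma mem_fv1 (π : V → Fin 2 → ℕ) (S : Set V) (m : V → Fin 2 → ℤ) (A : Set (V × V)) (v : V) :
    v ∈ finalVoters A π S m 1 ↔ finalScore A π S m v 0 < finalScore A π S m v 1 := by
  unfold finalVoters
  simp only [Finset.mem_filter, Finset.mem_univ, true_and]
  constructor
  · intro h; exact h 0 (by decide)
  · intro h j hj
    fin_cases j
    · exact h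
    · exact absurd rfl hj

lemma fv1_eq (π : V → Fin 2 → ℕ) (hinj : ∀ v : V, π v 0 ≠ π v 1)
    (S : Set V) (m : V → Fin 2 → ℤ) (A : Set (V × V)) :
    finalVoters A π S m 1 = Finset.univ \ finalVoters A π S m 0 := by
  ext v
  simp only [Finset.mem_sdiff, Finset.mem_univ, true_and, mem_fv0, mem_fv1]
  constructor
  · intro h; exact not_lt.mpr (le_of_lt h)
  · intro h
    rcases lt_or_gt_of_ne (no_tie π hinj S m A v) with h' | h'
    · exact h'
    · exact absurd h' h

lemma MoV_eq_s8 (π : V → Fin 2 → ℕ) (hinj : ∀ v : V, π v 0 ≠ π v 1)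
    (S : Set V) (m : V → Fin 2 → ℤ) (A : Set (V × V)) :
    MoV A π S m = 2 * ((finalVoters A π S m 0).card : ℤ) - (Fintype.card V : ℤ) := by
  have hsup : ((Finset.univ.erase (0 : Fin 2)).sup
      fun c => (finalVoters A π S m c).card) = (finalVoters A π S m 1).card := by
    have h : (Finset.univ.erase (0 : Fin 2)) = {1} := by decide
    rw [h, Finset.sup_singleton]
  have hcard : (finalVoters A π S m 1).card =
      Fintype.card V - (finalVoters A π S m 0).card := by
    rw [fv1_eq π hinj S m A, Finset.card_sdiff_of_subset (Finset.subset_univ _), Finset.card_univ]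
  have hle : (finalVoters A π S m 0).card ≤ Fintype.card V := by
    rw [← Finset.card_univ]; exact Finset.card_le_card (Finset.subset_univ _)
  unfold MoV
  rw [hsup, hcard]
  push_cast [Nat.cast_sub hle]
  ring

lemma diff_mono (π : V → Fin 2 → ℕ) (S : Set V) (m : V → Fin 2 → ℤ)
    (hm : ∀ s ∈ S, m s 0 ≤ 0 ∧ 0 ≤ m s 1)
    {A B : Set (V × V)} (hAB : A ⊆ B) (v : V) :
    finalScore B π S m v 0 - finalScore B π S m v 1 ≤
      finalScore A π S m v 0 - finalScore A π S m v 1 := by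
  unfold finalScore
  set fA := Finset.univ.filter (fun s => s ∈ S ∧ Reaches A s v) with hfA
  set fB := Finset.univ.filter (fun s => s ∈ S ∧ Reaches B s v) with hfB
  have hsub : fA ⊆ fB := by
    intro s hs
    simp only [hfA, hfB, Finset.mem_filter] at *
    exact ⟨hs.1, hs.2.1, reaches_mono hAB hs.2.2⟩
  have hkey : ∑ s ∈ fA, ((m s 1 : ℚ) - (m s 0 : ℚ)) ≤
      ∑ s ∈ fB, ((m s 1 : ℚ) - (m s 0 : ℚ)) := by
    apply Finset.sum_le_sum_of_subset_of_nonneg hsub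
    intro s hs _
    simp only [hfB, Finset.mem_filter] at hs
    have := hm s hs.2.1
    have h0 : (m s 0 : ℚ) ≤ 0 := by exact_mod_cast this.1
    have h1 : (0:ℚ) ≤ (m s 1 : ℚ) := by exact_mod_cast this.2
    linarith
  rw [Finset.sum_sub_distrib, Finset.sum_sub_distrib] at hkey
  linarith

lemma fv0_subset (π : V → Fin 2 → ℕ) (S : Set V) (m : V → Fin 2 → ℤ)
    (hm : ∀ s ∈ S, m s 0 ≤ 0 ∧ 0 ≤ m s 1)
    {A B : Set (V × V)} (hAB : A ⊆ B) :
    finalVoters B π S m 0 ⊆ finalVoters A π S m 0 := by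
  intro v hv
  rw [mem_fv0] at hv ⊢
  have := diff_mono π S m hm hAB v
  linarith

lemma MoV_antitone (π : V → Fin 2 → ℕ) (hinj : ∀ v : V, π v 0 ≠ π v 1)
    (S : Set V) (m : V → Fin 2 → ℤ)
    (hm : ∀ s ∈ S, m s 0 ≤ 0 ∧ 0 ≤ m s 1)
    {A B : Set (V × V)} (hAB : A ⊆ B) :
    MoV B π S m ≤ MoV A π S m := by
  rw [MoV_eq_s8 π hinj S m A, MoV_eq_s8 π hinj S m B]
  have := Finset.card_le_card (fv0_subset π S m hm hAB)
  have : ((finalVoters B π S m 0).card : ℤ) ≤ ((finalVoters A π S m 0).card : ℤ) := by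
    exact_mod_cast this
  linarith

end Aux

/-- With two candidates and every seed's message weakly unfavorable to c₀, MoV is antitone in
the removed edge set; in particular removing all edges maximizes ΔMoV⁻. -/
theorem edge_removal_antitone_two_candidates {V : Type*} [Fintype V]
    (Es : Set (V × V)) (π : V → Fin 2 → ℕ)
    (hinj : ∀ v : V, π v 0 ≠ π v 1)
    (S : Set V) (m : V → Fin 2 → ℤ)
    (hm : ∀ s ∈ S, m s 0 ≤ 0 ∧ 0 ≤ m s 1) :
    (∀ E1 E2 : Set (V × V), E1 ⊆ E2 → E2 ⊆ Es →
        MoV (Es \ E1) π S m ≤ MoV (Es \ E2) π S m) ∧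
    (∀ E' : Set (V × V), E' ⊆ Es →
        MoV (Es \ E') π S m - MoV Es π S m ≤
          MoV (Es \ Es) π S m - MoV Es π S m) := by
  constructor
  · intro E1 E2 h12 _
    exact MoV_antitone π hinj S m hm (Set.diff_subset_diff_right h12)
  · intro E' hE'
    have := MoV_antitone π hinj S m hm
      (Set.diff_subset_diff_right hE' : Es \ Es ⊆ Es \ E')
    linarith
end
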